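/- arXiv:1806.08547 — 3 statements merged into one kernel-verified Lean document; each statement's English description precedes it below -/
import Mathlib

section
/- For the OneMax problem under a dynamic uniform constraint with cardinality bound changing from B to B* and D = |B* − B|, the MOEA, starting from a solution that is optimal for bound B, has expected re-optimization time O(nD log((n−B)/(n−B*))) if B < B*, and O(nD log(B/B*)) if B > B*. -/
open scoped ENNReal
open Classical

noncomputable section

/-- Probability that the Markov chain with transition kernel `K`, started at `x`,
has not visited the target set `A` during the time steps `0, 1, …, t`. -/
def survive {S : Type*} (K : S → S → ℝ≥0∞) (A : S → Prop) : ℕ → S → ℝ≥0∞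
  | 0, x => if A x then 0 else 1
  | t + 1, x => if A x then 0 else ∑' y, K x y * survive K A t y

/-- Expected hitting time of the set `A` for the Markov chain with kernel `K` started at `x`,
computed as `∑_{t ≥ 0} Pr(T > t)`. -/
def hitTime {S : Type*} (K : S → S → ℝ≥0∞) (A : S → Prop) (x : S) : ℝ≥0∞ :=
  ∑' t, survive K A t x

/-- One step of a (1+1)-type algorithm: an offspring `z` is sampled from the mutation
distribution `pm x ·`; it replaces `x` iff `accept x z` holds. -/
def eaKernel {S : Type*} (pm : S → S → ℝ≥0∞) (accept : S → S → Prop) (x y : S) : ℝ≥0∞ :=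
  ∑' z, if (if accept x z then z else x) = y then pm x z else 0

/-- The number of one-bits of a bit string. -/
def ones {n : ℕ} (x : Fin n → Bool) : ℕ := (Finset.univ.filter fun i => x i = true).card

/-- Standard bit mutation: each of the `n` bits is flipped independently with probability `1/n`. -/
def pmutEA (n : ℕ) (x y : Fin n → Bool) : ℝ≥0∞ :=
  ((n : ℝ≥0∞)⁻¹) ^ hammingDist x y * (1 - (n : ℝ≥0∞)⁻¹) ^ (n - hammingDist x y)

/-- RLS mutation: exactly one bit, chosen uniformly at random, is flipped. -/
def pmutRLS (n : ℕ) (x y : Fin n → Bool) : ℝ≥0∞ :=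
  if hammingDist x y = 1 then (n : ℝ≥0∞)⁻¹ else 0


/-- Dominance w.r.t. the vector-valued fitness `f_MOEA(x) = (|x|₁, f(x))`:
`y` dominates `z` iff they have the same number of ones and `f y ≥ f z`. -/
def dominates {n : ℕ} (f : (Fin n → Bool) → ℝ) (y z : Fin n → Bool) : Prop :=
  ones y = ones z ∧ f z ≤ f y

/-- Strict dominance: same number of ones and strictly larger `f`-value. -/
def strictlyDominates {n : ℕ} (f : (Fin n → Bool) → ℝ) (y z : Fin n → Bool) : Prop :=
  ones y = ones z ∧ f z < f y

/-- The MOEA population update: the offspring `y` enters the population `P` iff its number of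
ones lies between the two bounds and no member of `P` dominates it; in that case all members
strictly dominated by `y` are removed. -/
def moeaUpdate {n : ℕ} (f : (Fin n → Bool) → ℝ) (lo hi : ℕ)
    (P : Finset (Fin n → Bool)) (y : Fin n → Bool) : Finset (Fin n → Bool) :=
  if lo ≤ ones y ∧ ones y ≤ hi ∧ ¬∃ w ∈ P, dominates f w y then
    insert y (P.filter fun z => ¬strictlyDominates f y z)
  else P

/-- One iteration of the MOEA: a parent is chosen uniformly at random from the population,
an offspring is created by standard bit mutation, and the population is updated. -/
def moeaKernel (n : ℕ) (f : (Fin n → Bool) → ℝ) (lo hi : ℕ)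
    (P Q : Finset (Fin n → Bool)) : ℝ≥0∞ :=
  (P.card : ℝ≥0∞)⁻¹ *
    ∑ x ∈ P, ∑' y, if moeaUpdate f lo hi P y = Q then pmutEA n x y else 0

lemma hitTime_le_of {S : Type*} (K : S → S → ℝ≥0∞) (A : S → Prop) (h : S → ℝ≥0∞)
    (hstep : ∀ x, ¬ A x → 1 + ∑' y, K x y * h y ≤ h x) (x : S) :
    hitTime K A x ≤ h x := by
  have key : ∀ t x, ∑ s ∈ Finset.range (t+1), survive K A s x ≤ h x := by
    intro t
    induction t with
    | zero =>
      intro x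
      rw [Finset.range_one, Finset.sum_singleton]
      show (if A x then 0 else 1 : ℝ≥0∞) ≤ h x
      by_cases hA : A x
      · rw [if_pos hA]; exact zero_le
      · rw [if_neg hA]
        calc (1:ℝ≥0∞) ≤ 1 + ∑' y, K x y * h y := le_self_add
        _ ≤ h x := hstep x hA
    | succ t ih =>
      intro x
      by_cases hA : A x
      · have hz : ∀ s, survive K A s x = 0 := by
          intro s; cases s <;> simp [survive, hA]
        simp [hz]
      · rw [Finset.sum_range_succ']
        have h0 : survive K A 0 x = 1 := by simp [survive, hA]
        have hs : ∀ s, survive K A (s+1) x = ∑' y, K x y * survive K A s y := by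
          intro s; simp [survive, hA]
        calc ∑ i ∈ Finset.range (t+1), survive K A (i+1) x + survive K A 0 x
            = 1 + ∑ i ∈ Finset.range (t+1), ∑' y, K x y * survive K A i y := by
              simp only [hs, h0]; ring
          _ = 1 + ∑' y, K x y * ∑ i ∈ Finset.range (t+1), survive K A i y := by
              congr 1
              rw [← Summable.tsum_finsetSum (fun i _ => ENNReal.summable)]
              congr 1; funext y; rw [Finset.mul_sum]
          _ ≤ 1 + ∑' y, K x y * h y := by
              gcongr with y
              exact ih y
          _ ≤ h x := hstep x hA
  rw [hitTime, ENNReal.tsum_eq_iSup_nat]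
  apply iSup_le
  intro t
  cases t with
  | zero => simp
  | succ t => exact key t x

lemma ones_le {n : ℕ} (x : Fin n → Bool) : ones x ≤ n := by
  classical
  calc ones x ≤ (Finset.univ : Finset (Fin n)).card := Finset.card_filter_le _ _
  _ = n := by simp

lemma card_false {n : ℕ} (x : Fin n → Bool) :
    (Finset.univ.filter fun i => x i = false).card = n - ones x := by
  classical
  have h := Finset.card_filter_add_card_filter_not (s := (Finset.univ : Finset (Fin n)))
    (p := fun i => x i = true)
  have h2 : (Finset.univ.filter fun i => ¬ x i = true) = (Finset.univ.filter fun i => x i = false) := by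
    apply Finset.filter_congr; intro i _; simp
  rw [h2] at h
  simp only [Finset.card_univ, Fintype.card_fin] at h
  have := ones_le x
  have hones : ones x = (Finset.univ.filter fun i => x i = true).card := rfl
  omega

lemma ones_update_true {n : ℕ} (x : Fin n → Bool) (i : Fin n) (h : x i = false) :
    ones (Function.update x i true) = ones x + 1 := by
  classical
  have : (Finset.univ.filter fun j => Function.update x i true j = true)
      = insert i (Finset.univ.filter fun j => x j = true) := by
    ext j
    by_cases hj : j = i <;> simp [Function.update, hj]
  rw [ones, this, Finset.card_insert_of_notMem (by simp [h]), ones]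

lemma ones_update_false {n : ℕ} (x : Fin n → Bool) (i : Fin n) (h : x i = true) :
    ones (Function.update x i false) + 1 = ones x := by
  classical
  have : (Finset.univ.filter fun j => x j = true)
      = insert i (Finset.univ.filter fun j => Function.update x i false j = true) := by
    ext j
    by_cases hj : j = i <;> simp [Function.update, hj, h]
  rw [ones, ones, this, Finset.card_insert_of_notMem (by simp [Function.update])]

lemma hammingDist_update {n : ℕ} (x : Fin n → Bool) (i : Fin n) (b : Bool) (h : x i ≠ b) :
    hammingDist x (Function.update x i b) = 1 := by
  classical
  rw [hammingDist]
  rw [Finset.card_eq_one]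
  refine ⟨i, ?_⟩
  ext j
  by_cases hj : j = i <;> simp [Function.update, hj, h]

lemma pmutEA_prod {n : ℕ} (x y : Fin n → Bool) :
    pmutEA n x y = ∏ i, (if x i = y i then (1 - (n:ℝ≥0∞)⁻¹) else (n:ℝ≥0∞)⁻¹) := by
  classical
  rw [← Finset.prod_filter_mul_prod_filter_not Finset.univ (fun i => x i = y i)]
  have h1 : ∏ i ∈ Finset.univ.filter (fun i => x i = y i), (if x i = y i then (1 - (n:ℝ≥0∞)⁻¹) else (n:ℝ≥0∞)⁻¹) = (1 - (n:ℝ≥0∞)⁻¹) ^ (n - hammingDist x y) := by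
    rw [Finset.prod_congr rfl (fun i hi => by rw [if_pos (Finset.mem_filter.mp hi).2]),
      Finset.prod_const]
    congr 1
    have h := Finset.card_filter_add_card_filter_not (s := (Finset.univ : Finset (Fin n)))
      (p := fun i => x i = y i)
    have hd : hammingDist x y = (Finset.univ.filter fun i => ¬ x i = y i).card := by
      rw [hammingDist]
    simp only [Finset.card_univ, Fintype.card_fin] at h
    omega
  have h2 : ∏ i ∈ Finset.univ.filter (fun i => ¬ x i = y i), (if x i = y i then (1 - (n:ℝ≥0∞)⁻¹) else (n:ℝ≥0∞)⁻¹) = ((n:ℝ≥0∞)⁻¹) ^ (hammingDist x y) := by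
    rw [Finset.prod_congr rfl (fun i hi => by rw [if_neg (Finset.mem_filter.mp hi).2]),
      Finset.prod_const]
    rfl
  rw [h1, h2, pmutEA, mul_comm]

lemma pmut_total {n : ℕ} (hn : 1 ≤ n) (x : Fin n → Bool) :
    ∑ y : Fin n → Bool, pmutEA n x y = 1 := by
  classical
  have hinv : (n:ℝ≥0∞)⁻¹ ≤ 1 := by
    rw [ENNReal.inv_le_one]
    exact_mod_cast Nat.one_le_cast.mpr hn
  have hb : ∀ i : Fin n, ∑ b : Bool, (if x i = b then (1 - (n:ℝ≥0∞)⁻¹) else (n:ℝ≥0∞)⁻¹) = 1 := by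
    intro i
    cases hxi : x i <;>
      simp [Fintype.sum_bool, hxi, tsub_add_cancel_of_le hinv, add_comm ((n:ℝ≥0∞)⁻¹)]
  calc ∑ y : Fin n → Bool, pmutEA n x y
      = ∑ y : Fin n → Bool, ∏ i, (if x i = y i then (1 - (n:ℝ≥0∞)⁻¹) else (n:ℝ≥0∞)⁻¹) :=
        Finset.sum_congr rfl (fun y _ => pmutEA_prod x y)
    _ = ∏ i : Fin n, ∑ b : Bool, (if x i = b then (1 - (n:ℝ≥0∞)⁻¹) else (n:ℝ≥0∞)⁻¹) :=
        (Fintype.prod_sum (fun (i : Fin n) (b : Bool) => if x i = b then (1 - (n:ℝ≥0∞)⁻¹) else (n:ℝ≥0∞)⁻¹)).symm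
    _ = 1 := by rw [Finset.prod_congr rfl (fun i _ => hb i), Finset.prod_const_one]

lemma real_quarter {n : ℕ} (hn : 1 ≤ n) : (1/4 : ℝ) ≤ (1 - 1/(n:ℝ))^(n-1) := by
  rcases Nat.lt_or_ge n 2 with h2 | h2
  · interval_cases n
    · norm_num
  · -- n ≥ 2
    set m : ℕ := n - 1 with hm
    have hm1 : 1 ≤ m := by omega
    have hmn : n = m + 1 := by omega
    have hmpos : (0:ℝ) < m := by exact_mod_cast hm1
    have hkey : ((m:ℝ)+1)/m ≤ 4 → (1/4:ℝ) ≤ ((m:ℝ)/(m+1)) → True := fun _ _ => trivial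
    have hub : (((m:ℝ)+1)/m)^m ≤ 4 := by
      have h1 : ((m:ℝ)+1)/m = 1 + 1/m := by field_simp
      have h2' : (1:ℝ) + 1/m ≤ Real.exp (1/m) := by
        have := Real.add_one_le_exp (1/(m:ℝ))
        linarith
      have h3 : ((1:ℝ) + 1/m)^m ≤ (Real.exp (1/m))^m := by
        apply pow_le_pow_left₀ (by positivity) h2'
      have h4 : (Real.exp (1/(m:ℝ)))^m = Real.exp 1 := by
        rw [← Real.exp_nat_mul]
        congr 1
        field_simp
      have h5 : Real.exp 1 ≤ 4 := by
        have := Real.exp_one_lt_d9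
        linarith
      rw [h1]
      calc ((1:ℝ) + 1/m)^m ≤ Real.exp 1 := h4 ▸ h3
        _ ≤ 4 := h5
    have hpos : (0:ℝ) < (((m:ℝ)+1)/m)^m := by positivity
    have hfrac : (1:ℝ) - 1/n = (m:ℝ)/(m+1) := by
      rw [hmn]; push_cast; field_simp; ring
    have hinvpow : ((m:ℝ)/(m+1))^m * (((m:ℝ)+1)/m)^m = 1 := by
      rw [← mul_pow]
      have : ((m:ℝ)/(m+1)) * (((m:ℝ)+1)/m) = 1 := by field_simp
      rw [this, one_pow]
    have : ((m:ℝ)/(m+1))^m = ((((m:ℝ)+1)/m)^m)⁻¹ := by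
      exact eq_inv_of_mul_eq_one_left hinvpow
    rw [hfrac, this, ← one_div]
    exact one_div_le_one_div_of_le hpos hub

lemma log_step {m : ℕ} (hm : 1 ≤ m) : 1/((m:ℝ)+1) ≤ Real.log (m+1) - Real.log m := by
  have hmpos : (0:ℝ) < m := by exact_mod_cast hm
  have h1 : Real.log ((m:ℝ)/(m+1)) ≤ (m:ℝ)/(m+1) - 1 :=
    Real.log_le_sub_one_of_pos (by positivity)
  rw [Real.log_div (by positivity) (by positivity)] at h1
  have h2 : (m:ℝ)/(m+1) - 1 = -(1/((m:ℝ)+1)) := by field_simp; ring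
  linarith [h1, h2 ▸ h1]

lemma harm_log {a : ℕ} (ha : 1 ≤ a) : ∀ b : ℕ, a ≤ b →
    ∑ k ∈ Finset.Ico a b, 1/((k:ℝ)+1) ≤ Real.log b - Real.log a := by
  intro b
  induction b with
  | zero => intro h; interval_cases a
  | succ b ih =>
    intro hab
    rcases Nat.lt_or_ge b a with h | h
    · have : a = b + 1 := by omega
      subst this
      simp
    · have hb1 : 1 ≤ b := le_trans ha h
      rw [Finset.sum_Ico_succ_top h]
      have := ih h
      have hstep : 1/((b:ℝ)+1) ≤ Real.log (b+1) - Real.log b := log_step hb1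
      push_cast
      push_cast at this hstep
      linarith

lemma ennreal_quarter {n : ℕ} (hn : 1 ≤ n) :
    ENNReal.ofReal (1/4) ≤ (1 - (n:ℝ≥0∞)⁻¹)^(n-1) := by
  have hnpos : (0:ℝ) < n := by exact_mod_cast hn
  have h1 : (1 - (n:ℝ≥0∞)⁻¹) = ENNReal.ofReal (1 - 1/(n:ℝ)) := by
    rw [ENNReal.ofReal_sub _ (by positivity), ENNReal.ofReal_one, one_div,
      ENNReal.ofReal_inv_of_pos hnpos, ENNReal.ofReal_natCast]
  rw [h1, ← ENNReal.ofReal_pow (by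
    have : 1/(n:ℝ) ≤ 1 := by
      rw [div_le_one hnpos]; exact_mod_cast hn
    linarith)]
  exact ENNReal.ofReal_le_ofReal (real_quarter hn)

lemma moeaUpdate_ones {n : ℕ} (lo hi : ℕ) (P : Finset (Fin n → Bool)) (y : Fin n → Bool) :
    moeaUpdate (fun x => (ones x : ℝ)) lo hi P y =
      if lo ≤ ones y ∧ ones y ≤ hi ∧ ∀ z ∈ P, ones z ≠ ones y then insert y P else P := by
  classical
  rw [moeaUpdate]
  have hsd : ∀ z, ¬ strictlyDominates (fun x => (ones x : ℝ)) y z := by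
    intro z ⟨h1, h2⟩
    simp only [h1, lt_self_iff_false, Nat.cast_lt] at h2
  have hdom : (¬∃ w ∈ P, dominates (fun x => (ones x : ℝ)) w y) ↔ ∀ z ∈ P, ones z ≠ ones y := by
    constructor
    · intro h z hz hne
      exact h ⟨z, hz, hne, by simp [hne]⟩
    · rintro h ⟨z, hz, h1, _⟩
      exact h z hz h1
  have hfilter : (P.filter fun z => ¬strictlyDominates (fun x => (ones x : ℝ)) y z) = P :=
    Finset.filter_true_of_mem (fun z _ => hsd z)
  by_cases hc : lo ≤ ones y ∧ ones y ≤ hi ∧ ∀ z ∈ P, ones z ≠ ones y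
  · rw [if_pos ⟨hc.1, hc.2.1, hdom.mpr hc.2.2⟩, if_pos hc, hfilter]
  · rw [if_neg, if_neg hc]
    intro ⟨h1, h2, h3⟩
    exact hc ⟨h1, h2, hdom.mp h3⟩

def GoodP {n : ℕ} (w : (Fin n → Bool) → ℕ) (a b : ℕ) (P : Finset (Fin n → Bool)) : Prop :=
  P.Nonempty ∧ (∀ z ∈ P, a ≤ w z ∧ w z ≤ b) ∧ (∀ z ∈ P, ∀ z' ∈ P, w z = w z' → z = z')

def gpot (n a b : ℕ) (k : ℕ) : ℝ≥0∞ :=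
  ENNReal.ofReal (8 * n * ((b:ℝ) - a + 1) * ∑ j ∈ Finset.Ico k b, 1/((n:ℝ)-j))

lemma gpot_anti {n a b : ℕ} (hbn : b ≤ n) (hab : a ≤ b) {k k' : ℕ} (hk : a ≤ k) (hkk : k ≤ k') :
    gpot n a b k' ≤ gpot n a b k := by
  apply ENNReal.ofReal_le_ofReal
  have hco : (0:ℝ) ≤ 8 * n * ((b:ℝ) - a + 1) := by
    have h' : (a:ℝ) ≤ b := by exact_mod_cast hab
    have : (0:ℝ) ≤ (b:ℝ) - a + 1 := by linarith
    positivity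
  apply mul_le_mul_of_nonneg_left _ hco
  apply Finset.sum_le_sum_of_subset_of_nonneg
  · apply Finset.Ico_subset_Ico hkk le_rfl
  · intro j hj _
    have hjb : j < b := (Finset.mem_Ico.mp hj).2
    have h' : (j:ℝ) < n := by exact_mod_cast lt_of_lt_of_le hjb hbn
    have : (0:ℝ) < (n:ℝ) - j := by linarith
    positivity

lemma core_bound (n lo hi a b tgt : ℕ) (hn : 1 ≤ n) (hab : a < b) (hbn : b ≤ n)
    (w : (Fin n → Bool) → ℕ)
    (hw_iff : ∀ y : Fin n → Bool, (lo ≤ ones y ∧ ones y ≤ hi) ↔ (a ≤ w y ∧ w y ≤ b))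
    (hw_eq : ∀ y z : Fin n → Bool, ones y = ones z ↔ w y = w z)
    (htgt : ∀ y : Fin n → Bool, ones y = tgt ↔ w y = b)
    (hflip : ∀ x : Fin n → Bool, a ≤ w x → w x < b →
      (n - w x : ℕ) ≤ (Finset.univ.filter fun i => w (Function.update x i (!x i)) = w x + 1).card)
    (x₀ : Fin n → Bool) (hx₀ : w x₀ = a) :
    hitTime (moeaKernel n (fun x => (ones x : ℝ)) lo hi) (fun P => ∃ x ∈ P, ones x = tgt) {x₀}
      ≤ gpot n a b a := by
  classical
  set h : Finset (Fin n → Bool) → ℝ≥0∞ :=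
    fun P => if GoodP w a b P then gpot n a b (P.sup w) else ⊤ with hh
  have hstart : h {x₀} = gpot n a b a := by
    have hg : GoodP w a b {x₀} := by
      refine ⟨Finset.singleton_nonempty _, ?_, ?_⟩
      · intro z hz; rw [Finset.mem_singleton] at hz; subst hz
        exact ⟨le_of_eq hx₀.symm, hx₀ ▸ le_of_lt hab⟩
      · intro z hz z' hz' _
        rw [Finset.mem_singleton] at hz hz'; rw [hz, hz']
    rw [hh]; simp only [if_pos hg, Finset.sup_singleton, hx₀]
  rw [← hstart]
  apply hitTime_le_of
  intro P hA
  by_cases hG : GoodP w a b P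
  swap
  · have : h P = ⊤ := by rw [hh]; simp only [if_neg hG]
    rw [this]; exact le_top
  obtain ⟨hne, hbounds, hinj⟩ := hG
  obtain ⟨xs, hxsP, hxsW⟩ := Finset.exists_mem_eq_sup P hne w
  set W := P.sup w with hWdef
  have hxsW' : w xs = W := hxsW.symm
  have haW : a ≤ W := hxsW' ▸ (hbounds xs hxsP).1
  have hWble : W ≤ b := hxsW' ▸ (hbounds xs hxsP).2
  have hWb : W < b := by
    rcases lt_or_eq_of_le hWble with h' | h'
    · exact h'
    · exact absurd ⟨xs, hxsP, (htgt xs).mpr (hxsW' ▸ h')⟩ hA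
  have hWn : W < n := lt_of_lt_of_le hWb hbn
  have hWlesup : ∀ z ∈ P, w z ≤ W := fun z hz => Finset.le_sup hz
  have hcard : P.card ≤ b - a + 1 := by
    have h1 : P.card ≤ (Finset.Icc a b).card := by
      apply Finset.card_le_card_of_injOn w
      · intro z hz; exact Finset.mem_Icc.mpr (hbounds z hz)
      · intro z hz z' hz' he; exact hinj z hz z' hz' he
    rw [Nat.card_Icc] at h1
    omega
  have hcard0 : (P.card : ℝ≥0∞) ≠ 0 := by
    simp only [ne_eq, Nat.cast_eq_zero, Finset.card_eq_zero]
    exact Finset.nonempty_iff_ne_empty.mp hne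
  have hcardtop : (P.card : ℝ≥0∞) ≠ ⊤ := ENNReal.natCast_ne_top _
  -- update facts
  have hupd : ∀ y : Fin n → Bool, moeaUpdate (fun x => (ones x : ℝ)) lo hi P y = P ∨
      (a ≤ w y ∧ w y ≤ b ∧ (∀ z ∈ P, w z ≠ w y) ∧
        moeaUpdate (fun x => (ones x : ℝ)) lo hi P y = insert y P) := by
    intro y
    rw [moeaUpdate_ones]
    by_cases hc : lo ≤ ones y ∧ ones y ≤ hi ∧ ∀ z ∈ P, ones z ≠ ones y
    · right
      obtain ⟨hc1, hc2⟩ := (hw_iff y).mp ⟨hc.1, hc.2.1⟩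
      exact ⟨hc1, hc2, fun z hz he => hc.2.2 z hz ((hw_eq z y).mpr he), if_pos hc⟩
    · left; exact if_neg hc
  have hgoodupd : ∀ y : Fin n → Bool,
      GoodP w a b (moeaUpdate (fun x => (ones x : ℝ)) lo hi P y) ∧
      W ≤ (moeaUpdate (fun x => (ones x : ℝ)) lo hi P y).sup w := by
    intro y
    rcases hupd y with h' | ⟨h1, h2, h3, h4⟩
    · rw [h']; exact ⟨⟨hne, hbounds, hinj⟩, le_rfl⟩
    · rw [h4]
      refine ⟨⟨Finset.insert_nonempty _ _, ?_, ?_⟩, ?_⟩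
      · intro z hz
        rcases Finset.mem_insert.mp hz with rfl | hz
        · exact ⟨h1, h2⟩
        · exact hbounds z hz
      · intro z hz z' hz' he
        rcases Finset.mem_insert.mp hz with hz1 | hz1 <;>
          rcases Finset.mem_insert.mp hz' with hz2 | hz2
        · rw [hz1, hz2]
        · subst hz1; exact absurd he.symm (h3 z' hz2)
        · subst hz2; exact absurd he (h3 z hz1)
        · exact hinj z hz1 z' hz2 he
      · rw [Finset.sup_insert]; exact le_sup_right
  have hhupd : ∀ y : Fin n → Bool,
      h (moeaUpdate (fun x => (ones x : ℝ)) lo hi P y) ≤ gpot n a b W := by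
    intro y
    obtain ⟨hg, hW⟩ := hgoodupd y
    rw [hh]
    simp only [if_pos hg]
    exact gpot_anti hbn (le_of_lt hab) haW hW
  -- improving offspring
  have hSacc : ∀ y : Fin n → Bool, w y = W + 1 →
      h (moeaUpdate (fun x => (ones x : ℝ)) lo hi P y) = gpot n a b (W+1) := by
    intro y hwy
    have hacc : moeaUpdate (fun x => (ones x : ℝ)) lo hi P y = insert y P := by
      rcases hupd y with h' | ⟨_, _, _, h4⟩
      · exfalso
        rw [moeaUpdate_ones] at h'
        rw [if_pos ?_] at h'
        · exact (Finset.insert_ne_self.mpr (fun hyP => by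
            have := hWlesup y hyP; omega)) h'
        · refine ⟨((hw_iff y).mpr ⟨by omega, by omega⟩).1,
            ((hw_iff y).mpr ⟨by omega, by omega⟩).2, ?_⟩
          intro z hz he
          have := (hw_eq z y).mp he
          have := hWlesup z hz
          omega
      · exact h4
    have hsup : (insert y P).sup w = W + 1 := by
      rw [Finset.sup_insert, hwy]
      exact sup_eq_left.mpr (by omega)
    have hg : GoodP w a b (moeaUpdate (fun x => (ones x : ℝ)) lo hi P y) := (hgoodupd y).1
    rw [hh]
    simp only [if_pos hg]
    rw [hacc, hsup]
  -- mass of improving mutations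
  set S : Finset (Fin n → Bool) := Finset.univ.filter (fun y => w y = W + 1) with hS
  set p0 : ℝ≥0∞ := ENNReal.ofReal (((n:ℝ) - W) / (4*n)) with hp0
  have hnR : (0:ℝ) < n := by exact_mod_cast hn
  have hWnR : (W:ℝ) < n := by exact_mod_cast hWn
  have hmass : p0 ≤ ∑ y ∈ S, pmutEA n xs y := by
    have hTcard : (n - W : ℕ) ≤
        (Finset.univ.filter (fun i => w (Function.update xs i (!xs i)) = W + 1)).card := by
      have h0 := hflip xs (hxsW' ▸ haW) (hxsW' ▸ hWb)
      rw [hxsW'] at h0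
      exact h0
    have hφinj : ∀ i ∈ Finset.univ.filter (fun i => w (Function.update xs i (!xs i)) = W + 1),
        ∀ j ∈ Finset.univ.filter (fun i => w (Function.update xs i (!xs i)) = W + 1),
        Function.update xs i (!xs i) = Function.update xs j (!xs j) → i = j := by
      intro i _ j _ he
      by_contra hij
      have h1 : Function.update xs i (!xs i) i = !xs i := Function.update_self i (!xs i) xs
      have h2 : Function.update xs j (!xs j) i = xs i := Function.update_of_ne hij (!xs j) xs
      rw [he, h2] at h1
      exact absurd h1 (by cases xs i <;> simp)
    have hval : ∀ i : Fin n, pmutEA n xs (Function.update xs i (!xs i))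
        = (n:ℝ≥0∞)⁻¹ * (1 - (n:ℝ≥0∞)⁻¹)^(n-1) := by
      intro i
      rw [pmutEA, hammingDist_update xs i (!xs i) (by cases xs i <;> simp), pow_one]
    have hr : ((n - W : ℕ) : ℝ) * (1/(n:ℝ) * (1/4)) = ((n:ℝ) - W) / (4*n) := by
      rw [Nat.cast_sub (le_of_lt hWn)]
      ring
    calc p0 ≤ ((n - W : ℕ) : ℝ≥0∞) * ((n:ℝ≥0∞)⁻¹ * (1 - (n:ℝ≥0∞)⁻¹)^(n-1)) := by
          have h4 : ((n - W : ℕ) : ℝ≥0∞) * ((n:ℝ≥0∞)⁻¹ * ENNReal.ofReal (1/4)) = p0 := by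
            rw [hp0, show ((n - W : ℕ) : ℝ≥0∞) = ENNReal.ofReal ((n - W : ℕ) : ℝ) from
                (ENNReal.ofReal_natCast _).symm,
              show ((n:ℝ≥0∞))⁻¹ = ENNReal.ofReal (1/(n:ℝ)) by
                rw [one_div, ENNReal.ofReal_inv_of_pos hnR, ENNReal.ofReal_natCast],
              ← ENNReal.ofReal_mul (by positivity), ← ENNReal.ofReal_mul (by positivity), hr]
          rw [← h4]
          exact mul_le_mul_right (mul_le_mul_right (ennreal_quarter hn) _) _
      _ ≤ ((Finset.univ.filter (fun i => w (Function.update xs i (!xs i)) = W + 1)).card : ℝ≥0∞)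
            * ((n:ℝ≥0∞)⁻¹ * (1 - (n:ℝ≥0∞)⁻¹)^(n-1)) := by
          exact mul_le_mul_left (Nat.cast_le.mpr hTcard) _
      _ = ∑ i ∈ Finset.univ.filter (fun i => w (Function.update xs i (!xs i)) = W + 1),
            pmutEA n xs (Function.update xs i (!xs i)) := by
          rw [Finset.sum_congr rfl (fun i _ => hval i), Finset.sum_const, nsmul_eq_mul]
      _ = ∑ y ∈ (Finset.univ.filter (fun i => w (Function.update xs i (!xs i)) = W + 1)).image
            (fun i => Function.update xs i (!xs i)), pmutEA n xs y := (Finset.sum_image hφinj).symm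
      _ ≤ ∑ y ∈ S, pmutEA n xs y := by
          apply Finset.sum_le_sum_of_subset
          intro y hy
          obtain ⟨i, hi, rfl⟩ := Finset.mem_image.mp hy
          rw [hS, Finset.mem_filter]
          exact ⟨Finset.mem_univ _, (Finset.mem_filter.mp hi).2⟩
  -- the potential gap
  set dlt : ℝ≥0∞ := ENNReal.ofReal (8 * n * ((b:ℝ) - a + 1) * (1/((n:ℝ) - W))) with hdlt
  have habR : (a:ℝ) ≤ b := by exact_mod_cast le_of_lt hab
  have hCnonneg : (0:ℝ) ≤ 8 * n * ((b:ℝ) - a + 1) := by nlinarith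
  have hnW : (0:ℝ) < (n:ℝ) - W := by linarith
  have hsumnonneg : (0:ℝ) ≤ ∑ j ∈ Finset.Ico (W+1) b, 1/((n:ℝ)-j) := by
    apply Finset.sum_nonneg
    intro j hj
    have hjb : j < b := (Finset.mem_Ico.mp hj).2
    have h' : (j:ℝ) < n := by exact_mod_cast lt_of_lt_of_le hjb hbn
    have : (0:ℝ) < (n:ℝ) - j := by linarith
    positivity
  have hgsplit : gpot n a b (W+1) + dlt = gpot n a b W := by
    rw [gpot, gpot, hdlt, ← ENNReal.ofReal_add (mul_nonneg hCnonneg hsumnonneg)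
      (mul_nonneg hCnonneg (by positivity))]
    congr 1
    rw [← mul_add]
    congr 1
    rw [Finset.sum_eq_sum_Ico_succ_bot hWb (fun j => 1/((n:ℝ)-j))]
    ring
  have hpd : ENNReal.ofReal (2 * ((b:ℝ) - a + 1)) ≤ p0 * dlt := by
    rw [hp0, hdlt, ← ENNReal.ofReal_mul (div_nonneg (by linarith) (by positivity))]
    apply ENNReal.ofReal_le_ofReal
    rw [show ((n:ℝ) - W) / (4*n) * (8 * n * ((b:ℝ) - a + 1) * (1/((n:ℝ) - W)))
        = 2 * ((b:ℝ) - a + 1) * (((n:ℝ) - W) / ((n:ℝ) - W)) * ((n:ℝ)/n) by ring]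
    rw [div_self (by linarith), div_self (by linarith), mul_one, mul_one]
  -- kernel algebra
  have htot : (∑' Q : Finset (Fin n → Bool), moeaKernel n (fun x => (ones x : ℝ)) lo hi P Q * h Q)
      = (P.card : ℝ≥0∞)⁻¹ * ∑ x ∈ P, ∑ y : Fin n → Bool,
          pmutEA n x y * h (moeaUpdate (fun x => (ones x : ℝ)) lo hi P y) := by
    rw [tsum_fintype]
    have e1 : ∀ Q : Finset (Fin n → Bool), moeaKernel n (fun x => (ones x : ℝ)) lo hi P Q * h Q
        = (P.card : ℝ≥0∞)⁻¹ * ∑ x ∈ P, ∑ y : Fin n → Bool,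
            (if moeaUpdate (fun x => (ones x : ℝ)) lo hi P y = Q then pmutEA n x y else 0) * h Q := by
      intro Q
      rw [moeaKernel, Finset.sum_congr rfl (fun x (_ : x ∈ P) => tsum_fintype
        (fun y => if moeaUpdate (fun x => (ones x : ℝ)) lo hi P y = Q then pmutEA n x y else 0)),
        mul_assoc, Finset.sum_mul]
      congr 1
      exact Finset.sum_congr rfl (fun x _ => Finset.sum_mul _ _ _)
    rw [Finset.sum_congr rfl (fun Q _ => e1 Q), ← Finset.mul_sum]
    congr 1
    rw [Finset.sum_comm]
    apply Finset.sum_congr rfl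
    intro x _
    rw [Finset.sum_comm]
    apply Finset.sum_congr rfl
    intro y _
    have : ∀ Q : Finset (Fin n → Bool),
        (if moeaUpdate (fun x => (ones x : ℝ)) lo hi P y = Q then pmutEA n x y else 0) * h Q
        = (if moeaUpdate (fun x => (ones x : ℝ)) lo hi P y = Q then pmutEA n x y * h Q else 0) := by
      intro Q
      split <;> simp
    rw [Finset.sum_congr rfl (fun Q _ => this Q), Finset.sum_ite_eq]
    simp
  have hF1 : ∀ x : Fin n → Bool, (∑ y : Fin n → Bool,
      pmutEA n x y * h (moeaUpdate (fun x => (ones x : ℝ)) lo hi P y)) ≤ gpot n a b W := by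
    intro x
    calc ∑ y : Fin n → Bool, pmutEA n x y * h (moeaUpdate (fun x => (ones x : ℝ)) lo hi P y)
        ≤ ∑ y : Fin n → Bool, pmutEA n x y * gpot n a b W :=
          Finset.sum_le_sum (fun y _ => mul_le_mul_right (hhupd y) _)
      _ = (∑ y : Fin n → Bool, pmutEA n x y) * gpot n a b W := (Finset.sum_mul _ _ _).symm
      _ = gpot n a b W := by rw [pmut_total hn x, one_mul]
  have hF2 : (∑ y : Fin n → Bool,
      pmutEA n xs y * h (moeaUpdate (fun x => (ones x : ℝ)) lo hi P y)) + p0 * dlt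
      ≤ gpot n a b W := by
    have hsplit_pm : (∑ y ∈ S, pmutEA n xs y)
        + ∑ y ∈ Finset.univ.filter (fun y => ¬ w y = W+1), pmutEA n xs y = 1 := by
      rw [hS, Finset.sum_filter_add_sum_filter_not, pmut_total hn]
    have e2 : ∑ y ∈ S, pmutEA n xs y * h (moeaUpdate (fun x => (ones x : ℝ)) lo hi P y)
        = (∑ y ∈ S, pmutEA n xs y) * gpot n a b (W+1) := by
      rw [Finset.sum_mul]
      apply Finset.sum_congr rfl
      intro y hy
      have hy' : w y = W + 1 := by
        rw [hS, Finset.mem_filter] at hy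
        exact hy.2
      rw [hSacc y hy']
    have e3 : ∑ y ∈ Finset.univ.filter (fun y => ¬ w y = W+1),
          pmutEA n xs y * h (moeaUpdate (fun x => (ones x : ℝ)) lo hi P y)
        ≤ (∑ y ∈ Finset.univ.filter (fun y => ¬ w y = W+1), pmutEA n xs y) * gpot n a b W := by
      rw [Finset.sum_mul]
      exact Finset.sum_le_sum (fun y _ => mul_le_mul_right (hhupd y) _)
    calc (∑ y : Fin n → Bool,
          pmutEA n xs y * h (moeaUpdate (fun x => (ones x : ℝ)) lo hi P y)) + p0 * dlt
        = ((∑ y ∈ S, pmutEA n xs y * h (moeaUpdate (fun x => (ones x : ℝ)) lo hi P y))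
            + ∑ y ∈ Finset.univ.filter (fun y => ¬ w y = W+1),
                pmutEA n xs y * h (moeaUpdate (fun x => (ones x : ℝ)) lo hi P y)) + p0 * dlt := by
          rw [hS, Finset.sum_filter_add_sum_filter_not]
      _ ≤ ((∑ y ∈ S, pmutEA n xs y) * gpot n a b (W+1)
            + (∑ y ∈ Finset.univ.filter (fun y => ¬ w y = W+1), pmutEA n xs y) * gpot n a b W)
            + (∑ y ∈ S, pmutEA n xs y) * dlt := by
          refine add_le_add (add_le_add (le_of_eq e2) e3) ?_
          exact mul_le_mul_left hmass _
      _ = (∑ y ∈ S, pmutEA n xs y) * (gpot n a b (W+1) + dlt)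
            + (∑ y ∈ Finset.univ.filter (fun y => ¬ w y = W+1), pmutEA n xs y) * gpot n a b W := by
          ring
      _ = ((∑ y ∈ S, pmutEA n xs y)
            + ∑ y ∈ Finset.univ.filter (fun y => ¬ w y = W+1), pmutEA n xs y) * gpot n a b W := by
          rw [hgsplit, add_mul]
      _ = gpot n a b W := by rw [hsplit_pm, one_mul]
  have hsum : (∑ x ∈ P, ∑ y : Fin n → Bool,
      pmutEA n x y * h (moeaUpdate (fun x => (ones x : ℝ)) lo hi P y)) + p0 * dlt
      ≤ (P.card : ℝ≥0∞) * gpot n a b W := by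
    rw [← Finset.sum_erase_add P _ hxsP, add_assoc]
    have e4 : ∑ x ∈ P.erase xs, ∑ y : Fin n → Bool,
        pmutEA n x y * h (moeaUpdate (fun x => (ones x : ℝ)) lo hi P y)
        ≤ ((P.card - 1 : ℕ) : ℝ≥0∞) * gpot n a b W := by
      calc ∑ x ∈ P.erase xs, ∑ y : Fin n → Bool,
          pmutEA n x y * h (moeaUpdate (fun x => (ones x : ℝ)) lo hi P y)
          ≤ ∑ _x ∈ P.erase xs, gpot n a b W := Finset.sum_le_sum (fun x _ => hF1 x)
        _ = ((P.card - 1 : ℕ) : ℝ≥0∞) * gpot n a b W := by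
            rw [Finset.sum_const, Finset.card_erase_of_mem hxsP, nsmul_eq_mul]
    calc (∑ x ∈ P.erase xs, ∑ y : Fin n → Bool,
          pmutEA n x y * h (moeaUpdate (fun x => (ones x : ℝ)) lo hi P y))
          + ((∑ y : Fin n → Bool,
              pmutEA n xs y * h (moeaUpdate (fun x => (ones x : ℝ)) lo hi P y)) + p0 * dlt)
        ≤ ((P.card - 1 : ℕ) : ℝ≥0∞) * gpot n a b W + gpot n a b W := add_le_add e4 hF2
      _ = (((P.card - 1 : ℕ) : ℝ≥0∞) + 1) * gpot n a b W := by ring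
      _ = (P.card : ℝ≥0∞) * gpot n a b W := by
          congr 1
          have hc1 : (P.card - 1 : ℕ) + 1 = P.card :=
            Nat.succ_pred_eq_of_pos (Finset.card_pos.mpr hne)
          exact_mod_cast congrArg (Nat.cast (R := ℝ≥0∞)) hc1
  have h1le : (1:ℝ≥0∞) ≤ (P.card : ℝ≥0∞)⁻¹ * (p0 * dlt) := by
    have hD0 : ((b - a + 1 : ℕ) : ℝ≥0∞) ≠ 0 := Nat.cast_ne_zero.mpr (by omega)
    have hDt : ((b - a + 1 : ℕ) : ℝ≥0∞) ≠ ⊤ := ENNReal.natCast_ne_top _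
    have hinv : ((b - a + 1 : ℕ) : ℝ≥0∞)⁻¹ ≤ (P.card : ℝ≥0∞)⁻¹ :=
      ENNReal.inv_le_inv.mpr (Nat.cast_le.mpr hcard)
    have hDle : ((b - a + 1 : ℕ) : ℝ≥0∞) ≤ p0 * dlt := by
      refine le_trans ?_ hpd
      rw [show ((b - a + 1 : ℕ) : ℝ≥0∞) = ENNReal.ofReal ((b - a + 1 : ℕ) : ℝ) from
        (ENNReal.ofReal_natCast _).symm]
      apply ENNReal.ofReal_le_ofReal
      have hcast : ((b - a + 1 : ℕ) : ℝ) = (b:ℝ) - a + 1 := by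
        push_cast [le_of_lt hab]
        ring
      rw [hcast]
      linarith
    calc (1:ℝ≥0∞) = ((b - a + 1 : ℕ) : ℝ≥0∞)⁻¹ * ((b - a + 1 : ℕ) : ℝ≥0∞) :=
          (ENNReal.inv_mul_cancel hD0 hDt).symm
      _ ≤ (P.card : ℝ≥0∞)⁻¹ * (p0 * dlt) := mul_le_mul' hinv hDle
  have hhP : h P = gpot n a b W := by
    rw [hh]
    exact if_pos (⟨hne, hbounds, hinj⟩ : GoodP w a b P)
  rw [hhP, htot]
  calc 1 + (P.card : ℝ≥0∞)⁻¹ * ∑ x ∈ P, ∑ y : Fin n → Bool,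
        pmutEA n x y * h (moeaUpdate (fun x => (ones x : ℝ)) lo hi P y)
      ≤ (P.card : ℝ≥0∞)⁻¹ * (p0 * dlt) + (P.card : ℝ≥0∞)⁻¹ * ∑ x ∈ P, ∑ y : Fin n → Bool,
        pmutEA n x y * h (moeaUpdate (fun x => (ones x : ℝ)) lo hi P y) := add_le_add_left h1le _
    _ = (P.card : ℝ≥0∞)⁻¹ * ((∑ x ∈ P, ∑ y : Fin n → Bool,
        pmutEA n x y * h (moeaUpdate (fun x => (ones x : ℝ)) lo hi P y)) + p0 * dlt) := by
        rw [mul_add, add_comm]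
    _ ≤ (P.card : ℝ≥0∞)⁻¹ * ((P.card : ℝ≥0∞) * gpot n a b W) := mul_le_mul_right hsum _
    _ = gpot n a b W := by rw [← mul_assoc, ENNReal.inv_mul_cancel hcard0 hcardtop, one_mul]

lemma sum_reindex (n B Bs : ℕ) (hB : B ≤ Bs) (hBs : Bs ≤ n) :
    ∑ j ∈ Finset.Ico B Bs, 1/((n:ℝ)-j) = ∑ k ∈ Finset.Ico (n-Bs) (n-B), 1/((k:ℝ)+1) := by
  refine Finset.sum_nbij' (fun j => n - 1 - j) (fun k => n - 1 - k) ?_ ?_ ?_ ?_ ?_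
  · intro j hj
    rw [Finset.mem_Ico] at hj ⊢
    omega
  · intro k hk
    rw [Finset.mem_Ico] at hk ⊢
    omega
  · intro j hj
    rw [Finset.mem_Ico] at hj
    omega
  · intro k hk
    rw [Finset.mem_Ico] at hk
    omega
  · intro j hj
    rw [Finset.mem_Ico] at hj
    have h1 : ((n - 1 - j : ℕ) : ℝ) = (n:ℝ) - 1 - j := by
      have : (j:ℝ) ≤ (n:ℝ) - 1 := by
        have : j + 1 ≤ n := by omega
        have := (Nat.cast_le (α := ℝ)).mpr this
        push_cast at this
        linarith
      rw [Nat.cast_sub (by omega), Nat.cast_sub (by omega)]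
      push_cast
      ring
    rw [h1]
    ring_nf
/-- For OneMax under a dynamic uniform constraint changing from `B` to `B*`,
the MOEA started with the population `{x₀}` where `x₀` is optimal for bound `B`
(exactly `B` ones) finds a solution with exactly `B*` ones in expected time
`O(nD log((n−B)/(n−B*)))` if `B < B*` and `O(nD log(B/B*))` if `B > B*`, where `D = |B*−B|`. -/
theorem stmt_2 :
    ∃ c : ℝ, 0 < c ∧ ∃ n₀ : ℕ, ∀ n : ℕ, n₀ ≤ n → ∀ B Bs : ℕ, B ≤ n → Bs ≤ n →
      ∀ x₀ : Fin n → Bool, ones x₀ = B →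
        ((B < Bs → Bs < n →
          hitTime (moeaKernel n (fun x => (ones x : ℝ)) (min B Bs) (max B Bs))
              (fun P => ∃ x ∈ P, ones x = Bs) {x₀} ≤
            ENNReal.ofReal (c * n * (Nat.dist B Bs : ℝ) *
              Real.log (((n : ℝ) - B) / ((n : ℝ) - Bs)))) ∧
         (Bs < B → 1 ≤ Bs →
          hitTime (moeaKernel n (fun x => (ones x : ℝ)) (min B Bs) (max B Bs))
              (fun P => ∃ x ∈ P, ones x = Bs) {x₀} ≤
            ENNReal.ofReal (c * n * (Nat.dist B Bs : ℝ) *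
              Real.log ((B : ℝ) / (Bs : ℝ))))) := by
  refine ⟨16, by norm_num, 1, ?_⟩
  intro n hn B Bs hB hBs x₀ hx₀
  constructor
  · -- case B < Bs
    intro hBBs hBsn
    rw [min_eq_left (le_of_lt hBBs), max_eq_right (le_of_lt hBBs)]
    have hflip : ∀ x : Fin n → Bool, B ≤ ones x → ones x < Bs →
        (n - ones x : ℕ) ≤
        (Finset.univ.filter fun i => ones (Function.update x i (!x i)) = ones x + 1).card := by
      intro x _ _
      have hsub : Finset.univ.filter (fun i => x i = false) ⊆
          Finset.univ.filter (fun i => ones (Function.update x i (!x i)) = ones x + 1) := by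
        intro i hi
        rw [Finset.mem_filter] at hi ⊢
        refine ⟨hi.1, ?_⟩
        rw [show (!x i) = true by rw [hi.2]; rfl]
        exact ones_update_true x i hi.2
      calc n - ones x = (Finset.univ.filter (fun i => x i = false)).card := (card_false x).symm
        _ ≤ _ := Finset.card_le_card hsub
    have hcore := core_bound n B Bs B Bs Bs hn hBBs hBs ones
      (fun y => Iff.rfl) (fun y z => Iff.rfl) (fun y => Iff.rfl) hflip x₀ hx₀
    refine le_trans hcore ?_
    rw [gpot]
    apply ENNReal.ofReal_le_ofReal
    -- real-number estimates
    have hnBs : (0:ℝ) < (n:ℝ) - Bs := by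
      have : (Bs:ℝ) < n := by exact_mod_cast hBsn
      linarith
    have hnB : (0:ℝ) < (n:ℝ) - B := by
      have : (B:ℝ) < Bs := by exact_mod_cast hBBs
      linarith
    have hS : ∑ j ∈ Finset.Ico B Bs, 1/((n:ℝ)-j)
        ≤ Real.log (((n:ℝ) - B) / ((n:ℝ) - Bs)) := by
      rw [sum_reindex n B Bs (le_of_lt hBBs) hBs]
      have h1 := harm_log (a := n - Bs) (by omega) (n - B) (by omega)
      rw [Real.log_div (ne_of_gt hnB) (ne_of_gt hnBs)]
      rw [show ((n - Bs : ℕ):ℝ) = (n:ℝ) - Bs by push_cast [hBs]; ring] at h1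
      rw [show ((n - B : ℕ):ℝ) = (n:ℝ) - B by push_cast [hB]; ring] at h1
      exact h1
    have hSnonneg : (0:ℝ) ≤ ∑ j ∈ Finset.Ico B Bs, 1/((n:ℝ)-j) := by
      apply Finset.sum_nonneg
      intro j hj
      have hjb : j < Bs := (Finset.mem_Ico.mp hj).2
      have : (j:ℝ) < n := by exact_mod_cast lt_of_lt_of_le hjb hBs
      have : (0:ℝ) < (n:ℝ) - j := by linarith
      positivity
    have hdist : (Nat.dist B Bs : ℝ) = (Bs:ℝ) - B := by
      rw [Nat.dist_eq_sub_of_le (le_of_lt hBBs)]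
      push_cast [le_of_lt hBBs]
      ring
    have hD1 : (1:ℝ) ≤ (Bs:ℝ) - B := by
      have : (B:ℝ) + 1 ≤ Bs := by exact_mod_cast hBBs
      linarith
    have hcoef : 8 * (n:ℝ) * ((Bs:ℝ) - B + 1) ≤ 16 * n * (Nat.dist B Bs : ℝ) := by
      rw [hdist]
      have hn0 : (0:ℝ) ≤ n := Nat.cast_nonneg n
      nlinarith
    have hL : (0:ℝ) ≤ Real.log (((n:ℝ) - B) / ((n:ℝ) - Bs)) :=
      le_trans hSnonneg hS
    have hcoef0 : (0:ℝ) ≤ 8 * (n:ℝ) * ((Bs:ℝ) - B + 1) := by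
      have hn0 : (0:ℝ) ≤ n := Nat.cast_nonneg n
      nlinarith
    calc 8 * (n:ℝ) * ((Bs:ℝ) - B + 1) * ∑ j ∈ Finset.Ico B Bs, 1/((n:ℝ)-j)
        ≤ (16 * n * (Nat.dist B Bs : ℝ)) * Real.log (((n:ℝ) - B) / ((n:ℝ) - Bs)) :=
          mul_le_mul hcoef hS hSnonneg (le_trans hcoef0 hcoef)
      _ = 16 * n * (Nat.dist B Bs : ℝ) * Real.log (((n:ℝ) - B) / ((n:ℝ) - Bs)) := by ring
  · -- case Bs < B
    intro hBsB hBs1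
    rw [min_eq_right (le_of_lt hBsB), max_eq_left (le_of_lt hBsB)]
    have honesle := ones_le (n := n)
    have hflip : ∀ x : Fin n → Bool, n - B ≤ n - ones x → n - ones x < n - Bs →
        (n - (n - ones x) : ℕ) ≤
        (Finset.univ.filter fun i =>
          n - ones (Function.update x i (!x i)) = (n - ones x) + 1).card := by
      intro x h1 h2
      have hxle := ones_le x
      have hxpos : Bs < ones x := by omega
      have hsub : Finset.univ.filter (fun i => x i = true) ⊆
          Finset.univ.filter (fun i =>
            n - ones (Function.update x i (!x i)) = (n - ones x) + 1) := by
        intro i hi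
        rw [Finset.mem_filter] at hi ⊢
        refine ⟨hi.1, ?_⟩
        rw [show (!x i) = false by rw [hi.2]; rfl]
        have h3 := ones_update_false x i hi.2
        omega
      calc n - (n - ones x) = ones x := by omega
        _ = (Finset.univ.filter (fun i => x i = true)).card := rfl
        _ ≤ _ := Finset.card_le_card hsub
    have hcore := core_bound n Bs B (n - B) (n - Bs) Bs hn (by omega) (by omega)
      (fun x => n - ones x)
      (fun y => by have := ones_le y; constructor <;> intro h <;> omega)
      (fun y z => by have := ones_le y; have := ones_le z; constructor <;> intro h <;> omega)
      (fun y => by have := ones_le y; constructor <;> intro h <;> omega)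
      hflip x₀ (by rw [hx₀])
    refine le_trans hcore ?_
    rw [gpot]
    apply ENNReal.ofReal_le_ofReal
    have hBspos : (0:ℝ) < Bs := by exact_mod_cast hBs1
    have hBpos : (0:ℝ) < B := by
      have : (Bs:ℝ) < B := by exact_mod_cast hBsB
      linarith
    have hcoefcast : ((n - Bs : ℕ):ℝ) - ((n - B : ℕ):ℝ) + 1 = (B:ℝ) - Bs + 1 := by
      push_cast [hB, hBs]
      ring
    have hS : ∑ j ∈ Finset.Ico (n - B) (n - Bs), 1/((n:ℝ)-j)
        ≤ Real.log ((B:ℝ) / (Bs:ℝ)) := by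
      rw [sum_reindex n (n - B) (n - Bs) (by omega) (by omega),
        show n - (n - Bs) = Bs by omega, show n - (n - B) = B by omega]
      have h1 := harm_log (a := Bs) hBs1 B (le_of_lt hBsB)
      rw [Real.log_div (ne_of_gt hBpos) (ne_of_gt hBspos)]
      exact h1
    have hSnonneg : (0:ℝ) ≤ ∑ j ∈ Finset.Ico (n - B) (n - Bs), 1/((n:ℝ)-j) := by
      apply Finset.sum_nonneg
      intro j hj
      have hjb : j < n - Bs := (Finset.mem_Ico.mp hj).2
      have : (j:ℝ) < n := by exact_mod_cast (by omega : j < n)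
      have : (0:ℝ) < (n:ℝ) - j := by linarith
      positivity
    have hdist : (Nat.dist B Bs : ℝ) = (B:ℝ) - Bs := by
      rw [Nat.dist_comm, Nat.dist_eq_sub_of_le (le_of_lt hBsB)]
      push_cast [le_of_lt hBsB]
      ring
    have hD1 : (1:ℝ) ≤ (B:ℝ) - Bs := by
      have : (Bs:ℝ) + 1 ≤ B := by exact_mod_cast hBsB
      linarith
    have hcoef : 8 * (n:ℝ) * (((n - Bs : ℕ):ℝ) - ((n - B : ℕ):ℝ) + 1)
        ≤ 16 * n * (Nat.dist B Bs : ℝ) := by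
      rw [hcoefcast, hdist]
      have hn0 : (0:ℝ) ≤ n := Nat.cast_nonneg n
      nlinarith
    have hcoef0 : (0:ℝ) ≤ 8 * (n:ℝ) * (((n - Bs : ℕ):ℝ) - ((n - B : ℕ):ℝ) + 1) := by
      rw [hcoefcast]
      have hn0 : (0:ℝ) ≤ n := Nat.cast_nonneg n
      nlinarith
    calc 8 * (n:ℝ) * (((n - Bs : ℕ):ℝ) - ((n - B : ℕ):ℝ) + 1)
          * ∑ j ∈ Finset.Ico (n - B) (n - Bs), 1/((n:ℝ)-j)
        ≤ (16 * n * (Nat.dist B Bs : ℝ)) * Real.log ((B:ℝ) / (Bs:ℝ)) :=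
          mul_le_mul hcoef hS hSnonneg (le_trans hcoef0 hcoef)
      _ = 16 * n * (Nat.dist B Bs : ℝ) * Real.log ((B:ℝ) / (Bs:ℝ)) := by ring
end
end

section
/- For maximizing a linear pseudo-Boolean function f(x) = Σ_{i=1}^n w_i x_i with positive weights under a dynamic uniform constraint with cardinality bound changing from B to B* and D = |B* − B|, the MOEA, starting from a solution that is optimal for bound B, has expected re-optimization time O(n·D²). -/
open scoped ENNReal
open Classical

noncomputable section

/-- A linear pseudo-Boolean function `f(x) = Σ_i w_i x_i`. -/
def linF {n : ℕ} (w : Fin n → ℝ) (x : Fin n → Bool) : ℝ := ∑ i, if x i then w i else 0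

/-- The maximum weight `w_max`. -/
def wmax {n : ℕ} (w : Fin n → ℝ) : ℝ := sSup (Set.range w)

/-- `x` is an optimal solution for the uniform constraint with cardinality bound `b`:
it is feasible and maximizes `f` among all feasible solutions. -/
def optForBound {n : ℕ} (w : Fin n → ℝ) (b : ℕ) (x : Fin n → Bool) : Prop :=
  ones x ≤ b ∧ ∀ y : Fin n → Bool, ones y ≤ b → linF w y ≤ linF w x

namespace Aux
variable {n : ℕ}

def onesSet (x : Fin n → Bool) : Finset (Fin n) := Finset.univ.filter fun i => x i = true

lemma ones_eq (x : Fin n → Bool) : ones x = (onesSet x).card := rfl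

lemma mem_onesSet {x : Fin n → Bool} {i : Fin n} : i ∈ onesSet x ↔ x i = true := by
  simp [onesSet]

lemma linF_eq (w : Fin n → ℝ) (x : Fin n → Bool) : linF w x = ∑ i ∈ onesSet x, w i := by
  rw [linF, onesSet, Finset.sum_filter]

lemma onesSet_update_true (x : Fin n → Bool) (i : Fin n) :
    onesSet (Function.update x i true) = insert i (onesSet x) := by
  ext j; by_cases h : j = i <;> simp [mem_onesSet, Function.update, h]

lemma onesSet_update_false (x : Fin n → Bool) (i : Fin n) :
    onesSet (Function.update x i false) = (onesSet x).erase i := by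
  ext j; by_cases h : j = i <;> simp [mem_onesSet, Function.update, h]

lemma ones_update_true {x : Fin n → Bool} {i : Fin n} (h : x i = false) :
    ones (Function.update x i true) = ones x + 1 := by
  rw [ones_eq, ones_eq, onesSet_update_true, Finset.card_insert_of_notMem]
  simp [mem_onesSet, h]

lemma ones_update_false {x : Fin n → Bool} {i : Fin n} (h : x i = true) :
    ones (Function.update x i false) = ones x - 1 := by
  rw [ones_eq, ones_eq, onesSet_update_false, Finset.card_erase_of_mem (mem_onesSet.2 h)]

lemma linF_update_true {w : Fin n → ℝ} {x : Fin n → Bool} {i : Fin n} (h : x i = false) :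
    linF w (Function.update x i true) = linF w x + w i := by
  rw [linF_eq, linF_eq, onesSet_update_true, Finset.sum_insert (by simp [mem_onesSet, h])]
  ring

lemma linF_update_false {w : Fin n → ℝ} {x : Fin n → Bool} {i : Fin n} (h : x i = true) :
    linF w (Function.update x i false) = linF w x - w i := by
  rw [linF_eq, linF_eq, onesSet_update_false,
    Finset.sum_erase_eq_sub (mem_onesSet.2 h)]

lemma hammingDist_update (x : Fin n → Bool) (i : Fin n) (b : Bool) (h : x i ≠ b) :
    hammingDist x (Function.update x i b) = 1 := by
  rw [hammingDist]
  rw [show ({j | x j ≠ Function.update x i b j} : Finset (Fin n)) = {i} from ?_]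
  · simp
  · ext j; by_cases hj : j = i <;> simp [Function.update, hj, h, Ne.symm]

lemma ones_le (x : Fin n → Bool) : ones x ≤ n := by
  rw [ones_eq]
  exact le_trans (Finset.card_filter_le _ _) (by simp)

lemma exists_false_of_ones_lt {x : Fin n → Bool} (h : ones x < n) :
    ∃ i, x i = false := by
  by_contra hc
  push_neg at hc
  have : onesSet x = Finset.univ := by
    ext i; simp [mem_onesSet, hc i]
  rw [ones_eq, this] at h; simp at h

lemma exists_true_of_pos {x : Fin n → Bool} (h : 0 < ones x) :
    ∃ i, x i = true := by
  rw [ones_eq, Finset.card_pos] at h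
  obtain ⟨i, hi⟩ := h
  exact ⟨i, mem_onesSet.1 hi⟩


/-- Exchange property: every selected weight is at least every unselected weight. -/
def Exch (w : Fin n → ℝ) (x : Fin n → Bool) : Prop :=
  ∀ j ∈ onesSet x, ∀ i ∉ onesSet x, w i ≤ w j

lemma sum_le_of_exch {w : Fin n → ℝ} (hw : ∀ i, 0 < w i) {S T : Finset (Fin n)}
    (hx : ∀ j ∈ S, ∀ i ∉ S, w i ≤ w j) (hcard : T.card ≤ S.card) :
    ∑ i ∈ T, w i ≤ ∑ i ∈ S, w i := by
  have hsplitT : ∑ i ∈ T \ S, w i + ∑ i ∈ T ∩ S, w i = ∑ i ∈ T, w i := by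
    rw [← Finset.sdiff_inter_self_left T S]
    exact Finset.sum_sdiff Finset.inter_subset_left
  have hsplitS : ∑ i ∈ S \ T, w i + ∑ i ∈ T ∩ S, w i = ∑ i ∈ S, w i := by
    rw [Finset.inter_comm T S, ← Finset.sdiff_inter_self_left S T]
    exact Finset.sum_sdiff Finset.inter_subset_left
  rw [← hsplitT, ← hsplitS]
  refine add_le_add ?_ le_rfl
  -- ∑_{T\S} w ≤ ∑_{S\T} w
  have hcard' : (T \ S).card ≤ (S \ T).card := by
    have h1 := Finset.card_sdiff_add_card_inter T S
    have h2 := Finset.card_sdiff_add_card_inter S T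
    rw [Finset.inter_comm] at h2
    omega
  rcases Finset.eq_empty_or_nonempty (T \ S) with hTS | hTS
  · rw [hTS]
    simp only [Finset.sum_empty]
    exact Finset.sum_nonneg fun i _ => (hw i).le
  · have hST : (S \ T).Nonempty := by
      rw [← Finset.card_pos] at hTS ⊢; omega
    obtain ⟨m, hmmem, hmmin⟩ := Finset.exists_min_image (S \ T) w hST
    calc ∑ i ∈ T \ S, w i ≤ ∑ _i ∈ T \ S, w m := by
          apply Finset.sum_le_sum
          intro i hi
          exact hx m (Finset.mem_sdiff.1 hmmem).1 i (Finset.mem_sdiff.1 hi).2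
      _ = (T \ S).card • w m := by rw [Finset.sum_const]
      _ ≤ (S \ T).card • w m := by
          apply nsmul_le_nsmul_left (hw m).le hcard'
      _ = ∑ _i ∈ S \ T, w m := by rw [Finset.sum_const]
      _ ≤ ∑ i ∈ S \ T, w i := Finset.sum_le_sum fun i hi => hmmin i hi

lemma opt_of_exch {w : Fin n → ℝ} (hw : ∀ i, 0 < w i) {x : Fin n → Bool}
    (hx : Exch w x) : optForBound w (ones x) x := by
  refine ⟨le_rfl, fun y hy => ?_⟩
  rw [linF_eq, linF_eq]
  exact sum_le_of_exch hw hx hy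

lemma exch_of_opt {w : Fin n → ℝ} {b : ℕ} {x : Fin n → Bool}
    (hx : optForBound w b x) : Exch w x := by
  intro j hj i hi
  have hij : i ≠ j := fun h => hi (h ▸ hj)
  set z := Function.update (Function.update x j false) i true with hz
  have hzi : (Function.update x j false) i = false := by
    by_contra hc
    rw [Function.update_of_ne hij] at hc
    simp [mem_onesSet] at hi
    simp [hi] at hc
  have hones : ones z = ones x := by
    rw [hz, ones_update_true hzi, ones_update_false (mem_onesSet.1 hj)]
    have : 0 < ones x := by
      rw [ones_eq, Finset.card_pos]; exact ⟨j, hj⟩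
    omega
  have hlin : linF w z = linF w x - w j + w i := by
    rw [hz, linF_update_true hzi, linF_update_false (mem_onesSet.1 hj)]
  have := hx.2 z (hones ▸ hx.1)
  rw [hlin] at this
  linarith

lemma ones_eq_of_opt {w : Fin n → ℝ} (hw : ∀ i, 0 < w i) {b : ℕ} {x : Fin n → Bool}
    (hb : b ≤ n) (hx : optForBound w b x) : ones x = b := by
  rcases lt_or_eq_of_le hx.1 with h | h
  · exfalso
    obtain ⟨i, hi⟩ := exists_false_of_ones_lt (lt_of_lt_of_le h hb)
    have h1 : ones (Function.update x i true) ≤ b := by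
      rw [ones_update_true hi]; omega
    have := hx.2 _ h1
    rw [linF_update_true hi] at this
    linarith [hw i]
  · exact h

lemma opt_self_of_opt {w : Fin n → ℝ} (hw : ∀ i, 0 < w i) {b : ℕ} {x : Fin n → Bool}
    (hb : b ≤ n) (hx : optForBound w b x) : optForBound w (ones x) x :=
  (ones_eq_of_opt hw hb hx) ▸ hx

/-- Step up: from an optimal solution with `ones x < n`, flipping the best zero-bit
gives an optimal solution for the next level. -/
lemma step_up {w : Fin n → ℝ} (hw : ∀ i, 0 < w i) {x : Fin n → Bool}
    (hx : optForBound w (ones x) x) (hlt : ones x < n) :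
    ∃ y, hammingDist x y = 1 ∧ ones y = ones x + 1 ∧ optForBound w (ones x + 1) y := by
  have hex : Exch w x := exch_of_opt hx
  have hne : ((onesSet x)ᶜ : Finset (Fin n)).Nonempty := by
    rw [← Finset.card_pos, Finset.card_compl, Fintype.card_fin]
    have := ones_eq x; omega
  obtain ⟨i, himem, himax⟩ := Finset.exists_max_image _ w hne
  rw [Finset.mem_compl, mem_onesSet] at himem
  have hxi : x i = false := by simpa using himem
  refine ⟨Function.update x i true, hammingDist_update x i true (by simp [hxi]), 
    ones_update_true hxi, ?_⟩
  have h1 : ones (Function.update x i true) = ones x + 1 := ones_update_true hxi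
  have h2 : Exch w (Function.update x i true) := by
    intro j hj k hk
    rw [onesSet_update_true] at hj hk
    rcases Finset.mem_insert.1 hj with hj | hj
    · subst hj
      exact himax k (Finset.mem_compl.2 fun hc => hk (Finset.mem_insert_of_mem hc))
    · exact hex j hj k fun hc => hk (Finset.mem_insert_of_mem hc)
  have := opt_of_exch hw h2
  rwa [h1] at this

lemma step_down {w : Fin n → ℝ} (hw : ∀ i, 0 < w i) {x : Fin n → Bool}
    (hx : optForBound w (ones x) x) (hpos : 0 < ones x) :
    ∃ y, hammingDist x y = 1 ∧ ones y = ones x - 1 ∧ optForBound w (ones x - 1) y := by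
  have hex : Exch w x := exch_of_opt hx
  have hne : (onesSet x).Nonempty := by rw [← Finset.card_pos]; exact ones_eq x ▸ hpos
  obtain ⟨i, himem, himin⟩ := Finset.exists_min_image _ w hne
  have hxi : x i = true := mem_onesSet.1 himem
  refine ⟨Function.update x i false, hammingDist_update x i false (by simp [hxi]),
    ones_update_false hxi, ?_⟩
  have h1 : ones (Function.update x i false) = ones x - 1 := ones_update_false hxi
  have h2 : Exch w (Function.update x i false) := by
    intro j hj k hk
    rw [onesSet_update_false] at hj hk
    by_cases hki : k = i
    · subst hki
      exact himin j (Finset.mem_of_mem_erase hj)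
    · exact hex j (Finset.mem_of_mem_erase hj) k fun hc => hk (Finset.mem_erase.2 ⟨hki, hc⟩)
  have := opt_of_exch hw h2
  rwa [h1] at this

-- Part C: MOEA population lemmas

def Opt (w : Fin n → ℝ) (x : Fin n → Bool) : Prop := optForBound w (ones x) x

def Good (w : Fin n → ℝ) (lo hi : ℕ) (P : Finset (Fin n → Bool)) : Prop :=
  (∀ x ∈ P, lo ≤ ones x ∧ ones x ≤ hi) ∧ Set.InjOn ones (P : Set (Fin n → Bool)) ∧ ∃ x ∈ P, Opt w x

def lev (w : Fin n → ℝ) (Bs : ℕ) (P : Finset (Fin n → Bool)) : ℕ :=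
  sInf {d : ℕ | ∃ x ∈ P, Opt w x ∧ Nat.dist (ones x) Bs = d}

lemma lev_set_nonempty {w : Fin n → ℝ} {lo hi Bs : ℕ} {P : Finset (Fin n → Bool)}
    (hP : Good w lo hi P) :
    {d : ℕ | ∃ x ∈ P, Opt w x ∧ Nat.dist (ones x) Bs = d}.Nonempty := by
  obtain ⟨x, hxP, hx⟩ := hP.2.2
  exact ⟨Nat.dist (ones x) Bs, x, hxP, hx, rfl⟩

lemma lev_le {w : Fin n → ℝ} {Bs : ℕ} {P : Finset (Fin n → Bool)} {x : Fin n → Bool}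
    (hxP : x ∈ P) (hx : Opt w x) : lev w Bs P ≤ Nat.dist (ones x) Bs :=
  Nat.sInf_le ⟨x, hxP, hx, rfl⟩

lemma persist {w : Fin n → ℝ} {lo hi : ℕ} {P : Finset (Fin n → Bool)}
    {x y : Fin n → Bool} (hxP : x ∈ P) (hx : Opt w x) :
    x ∈ moeaUpdate (linF w) lo hi P y := by
  rw [moeaUpdate]
  split
  · apply Finset.mem_insert_of_mem
    rw [Finset.mem_filter]
    refine ⟨hxP, fun hsd => ?_⟩
    obtain ⟨ho, hf⟩ := hsd
    exact absurd (hx.2 y (le_of_eq ho)) (not_le.2 hf)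
  · exact hxP

lemma good_update {w : Fin n → ℝ} {lo hi : ℕ} {P : Finset (Fin n → Bool)}
    (hP : Good w lo hi P) (y : Fin n → Bool) :
    Good w lo hi (moeaUpdate (linF w) lo hi P y) := by
  obtain ⟨hwin, hinj, x, hxP, hx⟩ := hP
  by_cases hc : lo ≤ ones y ∧ ones y ≤ hi ∧ ¬∃ v ∈ P, dominates (linF w) v y
  · have hupd : moeaUpdate (linF w) lo hi P y =
        insert y (P.filter fun z => ¬strictlyDominates (linF w) y z) := if_pos hc
    refine ⟨?_, ?_, x, persist hxP hx, hx⟩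
    · intro z hz
      rw [hupd, Finset.mem_insert] at hz
      rcases hz with hz | hz
      · exact hz ▸ ⟨hc.1, hc.2.1⟩
      · exact hwin z (Finset.mem_filter.1 hz).1
    · -- InjOn
      rw [hupd]
      intro a ha b hb hab
      simp only [Finset.coe_insert, Set.mem_insert_iff, Finset.mem_coe,
        Finset.mem_filter] at ha hb
      have key : ∀ z, z ∈ P → ¬strictlyDominates (linF w) y z → ones z = ones y → False := by
        intro z hzP hzn hzo
        apply hc.2.2
        refine ⟨z, hzP, hzo, ?_⟩
        by_contra hlt
        exact hzn ⟨hzo.symm ▸ rfl, not_le.1 hlt⟩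
      rcases ha with ha | ha <;> rcases hb with hb | hb
      · rw [ha, hb]
      · exact (key b hb.1 hb.2 (by rw [← hab, ha])).elim
      · exact (key a ha.1 ha.2 (by rw [hab, hb])).elim
      · exact hinj ha.1 hb.1 hab
  · rw [moeaUpdate, if_neg hc]
    exact ⟨hwin, hinj, x, hxP, hx⟩

lemma lev_update_le {w : Fin n → ℝ} {lo hi Bs : ℕ} {P : Finset (Fin n → Bool)}
    (hP : Good w lo hi P) (y : Fin n → Bool) :
    lev w Bs (moeaUpdate (linF w) lo hi P y) ≤ lev w Bs P := by
  have hmem : ∃ x ∈ P, Opt w x ∧ Nat.dist (ones x) Bs = lev w Bs P :=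
    Nat.sInf_mem (lev_set_nonempty (Bs := Bs) hP)
  obtain ⟨x, hxP, hx, hd⟩ := hmem
  calc lev w Bs (moeaUpdate (linF w) lo hi P y) ≤ Nat.dist (ones x) Bs :=
        lev_le (persist hxP hx) hx
    _ = lev w Bs P := hd

lemma card_le_of_good {w : Fin n → ℝ} {lo hi : ℕ} {P : Finset (Fin n → Bool)}
    (hP : Good w lo hi P) : P.card ≤ hi + 1 - lo := by
  have := Finset.card_le_card_of_injOn ones (fun x hx => Finset.mem_Icc.2 (hP.1 x hx)) hP.2.1
  rwa [Nat.card_Icc] at this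

lemma progress {w : Fin n → ℝ} (hw : ∀ i, 0 < w i) {lo hi Bs : ℕ}
    (hloBs : lo ≤ Bs) (hBshi : Bs ≤ hi) (hhin : hi ≤ n)
    {P : Finset (Fin n → Bool)} (hP : Good w lo hi P)
    (hA : ¬∃ x ∈ P, optForBound w Bs x) :
    ∃ xs ∈ P, ∃ ys, hammingDist xs ys = 1 ∧
      lev w Bs (moeaUpdate (linF w) lo hi P ys) < lev w Bs P := by
  have hmem : ∃ x ∈ P, Opt w x ∧ Nat.dist (ones x) Bs = lev w Bs P :=
    Nat.sInf_mem (lev_set_nonempty (Bs := Bs) hP)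
  obtain ⟨x, hxP, hx, hd⟩ := hmem
  have hlpos : 0 < lev w Bs P := by
    rcases Nat.eq_zero_or_pos (lev w Bs P) with h0 | h
    · exfalso
      rw [h0] at hd
      have : ones x = Bs := Nat.eq_of_dist_eq_zero hd
      exact hA ⟨x, hxP, this ▸ hx⟩
    · exact h
  have hwin := hP.1 x hxP
  have hbne : ones x ≠ Bs := fun h => by simp [h, Nat.dist_self] at hd; omega
  rcases lt_or_gt_of_ne hbne with hb | hb
  -- case ones x < Bs : step up
  · obtain ⟨y, hdist, hones, hopt⟩ := step_up hw hx (lt_of_lt_of_le hb (le_trans hBshi hhin))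
    refine ⟨x, hxP, y, hdist, ?_⟩
    have hyd : Nat.dist (ones y) Bs = lev w Bs P - 1 := by
      rw [hones, ← hd]; rw [Nat.dist, Nat.dist]; omega
    have hywin : lo ≤ ones y ∧ ones y ≤ hi := by
      constructor
      · rw [hones]; omega
      · rw [hones]; omega
    by_cases hdom : ∃ v ∈ P, dominates (linF w) v y
    · exfalso
      obtain ⟨v, hvP, hvo, hvf⟩ := hdom
      have hvopt : Opt w v := by
        refine ⟨le_rfl, fun z hz => ?_⟩
        refine le_trans (hopt.2 z ?_) hvf
        rw [← hones, ← hvo]; exact hz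
      have hle := lev_le (Bs := Bs) hvP hvopt
      rw [hvo, hyd] at hle
      omega
    · have hacc : moeaUpdate (linF w) lo hi P y =
          insert y (P.filter fun z => ¬strictlyDominates (linF w) y z) :=
        if_pos ⟨hywin.1, hywin.2, hdom⟩
      have hymem : y ∈ moeaUpdate (linF w) lo hi P y := by
        rw [hacc]; exact Finset.mem_insert_self _ _
      have hyopt : Opt w y := by rw [Opt, hones]; exact hopt
      have := lev_le (Bs := Bs) hymem hyopt
      rw [hyd] at this
      omega
  -- case ones x > Bs : step down
  · obtain ⟨y, hdist, hones, hopt⟩ := step_down hw hx (by omega)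
    refine ⟨x, hxP, y, hdist, ?_⟩
    have hyd : Nat.dist (ones y) Bs = lev w Bs P - 1 := by
      rw [hones, ← hd]; rw [Nat.dist, Nat.dist]; omega
    have hywin : lo ≤ ones y ∧ ones y ≤ hi := by
      constructor
      · rw [hones]; omega
      · rw [hones]; omega
    by_cases hdom : ∃ v ∈ P, dominates (linF w) v y
    · exfalso
      obtain ⟨v, hvP, hvo, hvf⟩ := hdom
      have hvopt : Opt w v := by
        refine ⟨le_rfl, fun z hz => ?_⟩
        refine le_trans (hopt.2 z ?_) hvf
        rw [← hones, ← hvo]; exact hz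
      have hle := lev_le (Bs := Bs) hvP hvopt
      rw [hvo, hyd] at hle
      omega
    · have hacc : moeaUpdate (linF w) lo hi P y =
          insert y (P.filter fun z => ¬strictlyDominates (linF w) y z) :=
        if_pos ⟨hywin.1, hywin.2, hdom⟩
      have hymem : y ∈ moeaUpdate (linF w) lo hi P y := by
        rw [hacc]; exact Finset.mem_insert_self _ _
      have hyopt : Opt w y := by rw [Opt, hones]; exact hopt
      have := lev_le (Bs := Bs) hymem hyopt
      rw [hyd] at this
      omega


/-- the exp-based numeric fact -/
lemma nat_pow_le : ∀ n : ℕ, 1 ≤ n → n ^ (n - 1) ≤ 4 * (n - 1) ^ (n - 1) := by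
  intro n hn
  rcases Nat.lt_or_ge n 2 with h2 | h2
  · interval_cases n <;> simp
  · set m : ℕ := n - 1 with hm
    have hm1 : 1 ≤ m := by omega
    have hnm : n = m + 1 := by omega
    rw [hnm]
    have hreal : ((m + 1 : ℕ) : ℝ) ^ m ≤ 4 * ((m : ℕ) : ℝ) ^ m := by
      have hmpos : (0 : ℝ) < m := by exact_mod_cast hm1
      have h1 : ((m + 1 : ℕ) : ℝ) = m * (1 + 1 / m) := by
        push_cast; field_simp
      have h2' : (1 + 1 / (m : ℝ)) ^ m ≤ Real.exp 1 := by
        have := Real.add_one_le_exp (1 / (m : ℝ))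
        calc (1 + 1 / (m : ℝ)) ^ m ≤ (Real.exp (1 / m)) ^ m := by
              apply pow_le_pow_left₀ (by positivity)
              linarith
          _ = Real.exp ((1 / m) * m) := by rw [← Real.exp_nat_mul]; ring_nf
          _ = Real.exp 1 := by rw [one_div, inv_mul_cancel₀ (ne_of_gt hmpos)]
      have h3 : Real.exp 1 ≤ 4 := by
        have := Real.exp_one_lt_d9
        linarith
      calc ((m + 1 : ℕ) : ℝ) ^ m = (m : ℝ) ^ m * (1 + 1 / m) ^ m := by
            rw [h1, mul_pow]
        _ ≤ (m : ℝ) ^ m * 4 := by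
            apply mul_le_mul_of_nonneg_left (le_trans h2' h3) (by positivity)
        _ = 4 * (m : ℝ) ^ m := by ring
    have := hreal
    exact_mod_cast (by push_cast at this ⊢; linarith : ((m + 1 : ℕ) ^ m : ℝ) ≤ (4 * m ^ m : ℝ))

lemma one_sub_inv_eq {n : ℕ} (hn : 1 ≤ n) :
    1 - (n : ℝ≥0∞)⁻¹ = ((n - 1 : ℕ) : ℝ≥0∞) / n := by
  have hn0 : (n : ℝ≥0∞) ≠ 0 := Nat.cast_ne_zero.2 (by omega)
  symm
  apply ENNReal.eq_sub_of_add_eq (ENNReal.inv_ne_top.2 hn0)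
  rw [← one_div, ENNReal.div_add_div_same]
  rw [show ((n - 1 : ℕ) : ℝ≥0∞) + 1 = (n : ℝ≥0∞) by exact_mod_cast Nat.sub_add_cancel hn]
  exact ENNReal.div_self hn0 (by simp)

lemma quarter_le_pow {n : ℕ} (hn : 1 ≤ n) :
    (4 : ℝ≥0∞)⁻¹ ≤ (1 - (n : ℝ≥0∞)⁻¹) ^ (n - 1) := by
  rw [one_sub_inv_eq hn, div_eq_mul_inv, mul_pow, ← ENNReal.inv_pow, ← div_eq_mul_inv]
  rw [ENNReal.le_div_iff_mul_le
    (Or.inl (by positivity)) (Or.inl (by simp [ENNReal.pow_ne_top]))]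
  rw [show ((n : ℝ≥0∞)) ^ (n - 1) = ((n ^ (n - 1) : ℕ) : ℝ≥0∞) by push_cast; ring]
  rw [show (((n - 1 : ℕ)) : ℝ≥0∞) ^ (n - 1) = (((n - 1) ^ (n - 1) : ℕ) : ℝ≥0∞)
    by push_cast; ring]
  calc (4 : ℝ≥0∞)⁻¹ * ((n ^ (n - 1) : ℕ) : ℝ≥0∞)
      ≤ 4⁻¹ * ((4 * (n - 1) ^ (n - 1) : ℕ) : ℝ≥0∞) := by
        exact mul_le_mul_right (Nat.cast_le.2 (nat_pow_le n hn)) _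
    _ = ((n - 1) ^ (n - 1) : ℕ) := by
        push_cast
        rw [← mul_assoc, ENNReal.inv_mul_cancel (by norm_num) (by norm_num), one_mul]

lemma pmut_single_flip {n : ℕ} (hn : 1 ≤ n) {x y : Fin n → Bool}
    (hd : hammingDist x y = 1) : (n : ℝ≥0∞)⁻¹ * 4⁻¹ ≤ pmutEA n x y := by
  rw [pmutEA, hd, pow_one]
  exact mul_le_mul_right (quarter_le_pow hn) _

lemma pmut_sum_eq {n : ℕ} (hn : 1 ≤ n) (x : Fin n → Bool) :
    ∑ y : Fin n → Bool, pmutEA n x y = 1 := by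
  set a : ℝ≥0∞ := (n : ℝ≥0∞)⁻¹ with ha
  have hab : a + (1 - a) = 1 := by
    apply add_tsub_cancel_of_le
    rw [ha]
    exact ENNReal.inv_le_one.2 (by exact_mod_cast hn)
  have hbij : Function.Bijective
      (fun y : Fin n → Bool => Finset.filter (fun i => x i ≠ y i) Finset.univ) := by
    rw [Function.bijective_iff_has_inverse]
    refine ⟨fun T => fun i => if i ∈ T then !(x i) else x i, ?_, ?_⟩
    · intro y
      funext i
      by_cases h : x i = y i
      · simp [h]
      · simp only [Finset.mem_filter, Finset.mem_univ, true_and, h, not_false_iff, if_pos]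
        revert h
        cases x i <;> cases y i <;> simp
    · intro T
      ext i
      simp only [Finset.mem_filter, Finset.mem_univ, true_and]
      by_cases h : i ∈ T
      · simp only [h, if_pos, iff_true]
        cases x i <;> simp
      · simp [h]
  have hstep : ∑ y : Fin n → Bool, pmutEA n x y =
      ∑ T : Finset (Fin n), a ^ T.card * (1 - a) ^ (n - T.card) :=
    Fintype.sum_bijective _ hbij _ _ (fun y => by rw [pmutEA, hammingDist])
  rw [hstep, ← Finset.powerset_univ]
  have hterm : ∀ T ∈ (Finset.univ : Finset (Fin n)).powerset,
      a ^ T.card * (1 - a) ^ (n - T.card)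
        = (∏ _i ∈ T, a) * ∏ _i ∈ (Finset.univ \ T), (1 - a) := by
    intro T _
    rw [Finset.prod_const, Finset.prod_const,
      Finset.card_sdiff_of_subset (Finset.subset_univ T), Finset.card_univ, Fintype.card_fin]
  rw [Finset.sum_congr rfl hterm, ← Finset.prod_add]
  rw [hab, Finset.prod_const_one]


lemma drift {S : Type*} [Fintype S] (K : S → S → ℝ≥0∞) (A G : S → Prop) (L : S → ℕ)
    (p : ℝ≥0∞) (hp0 : p ≠ 0) (hptop : p ≠ ∞)
    (hsub : ∀ x, G x → ¬A x → ∑' y, K x y ≤ 1)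
    (hinv : ∀ x, G x → ¬A x → ∀ y, K x y ≠ 0 → G y ∧ L y ≤ L x)
    (hprog : ∀ x, G x → ¬A x → p ≤ ∑' y, if L y < L x then K x y else 0) :
    ∀ x, G x → hitTime K A x ≤ (L x : ℝ≥0∞) / p := by
  -- first: on nontarget good states, L ≥ 1
  have hL1 : ∀ x, G x → ¬A x → 1 ≤ L x := by
    intro x hG hA
    by_contra h
    have hL0 : L x = 0 := by omega
    have := hprog x hG hA
    rw [hL0] at this
    simp only [Nat.not_lt_zero, if_false, tsum_zero] at this
    exact hp0 (le_antisymm this zero_le)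
  -- key one-step inequality
  have hkey : ∀ x, G x → ¬A x → p + ∑' y, K x y * (L y : ℝ≥0∞) ≤ (L x : ℝ≥0∞) := by
    intro x hG hA
    have hL1x := hL1 x hG hA
    set g : ℝ≥0∞ := ∑' y, if L y < L x then K x y else 0 with hg
    have hterm : ∀ y, K x y * (L y : ℝ≥0∞) ≤
        (if L y < L x then K x y else 0) * ((L x - 1 : ℕ) : ℝ≥0∞)
        + (if L y < L x then 0 else K x y) * (L x : ℝ≥0∞) := by
      intro y
      by_cases hy : L y < L x
      · simp only [hy, if_true, zero_mul, add_zero]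
        have hle : L y ≤ L x - 1 := by omega
        exact mul_le_mul_right (Nat.cast_le.2 hle) _
      · simp only [hy, if_false, zero_mul, zero_add]
        by_cases hK : K x y = 0
        · simp [hK]
        · have := (hinv x hG hA y hK).2
          exact mul_le_mul_right (Nat.cast_le.2 this) _
    calc p + ∑' y, K x y * (L y : ℝ≥0∞)
        ≤ p + ∑' y, ((if L y < L x then K x y else 0) * ((L x - 1 : ℕ) : ℝ≥0∞)
            + (if L y < L x then 0 else K x y) * (L x : ℝ≥0∞)) := by
          gcongr with y; exact hterm y
      _ = p + g * ((L x - 1 : ℕ) : ℝ≥0∞)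
            + (∑' y, if L y < L x then 0 else K x y) * (L x : ℝ≥0∞) := by
          rw [ENNReal.tsum_add, ENNReal.tsum_mul_right, ENNReal.tsum_mul_right, ← add_assoc]
      _ ≤ g + g * ((L x - 1 : ℕ) : ℝ≥0∞)
            + (∑' y, if L y < L x then 0 else K x y) * (L x : ℝ≥0∞) := by
          gcongr
          exact hprog x hG hA
      _ = g * (L x : ℝ≥0∞) + (∑' y, if L y < L x then 0 else K x y) * (L x : ℝ≥0∞) := by
          congr 1
          have : ((L x : ℕ) : ℝ≥0∞) = 1 + ((L x - 1 : ℕ) : ℝ≥0∞) := by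
            rw [← Nat.cast_one, ← Nat.cast_add, Nat.cast_inj]; omega
          rw [this, mul_add, mul_one]
      _ = (g + ∑' y, if L y < L x then 0 else K x y) * (L x : ℝ≥0∞) := by
          rw [add_mul]
      _ = (∑' y, K x y) * (L x : ℝ≥0∞) := by
          congr 1
          rw [hg, ← ENNReal.tsum_add]
          congr 1; ext y
          by_cases hy : L y < L x <;> simp [hy]
      _ ≤ 1 * (L x : ℝ≥0∞) := by
          gcongr
          exact hsub x hG hA
      _ = (L x : ℝ≥0∞) := one_mul _
  have hpleL : ∀ x, G x → ¬A x → p ≤ (L x : ℝ≥0∞) :=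
    fun x hG hA => le_trans (le_add_right le_rfl) (hkey x hG hA)
  -- main induction
  have main : ∀ t, ∀ x, G x →
      ∑ s ∈ Finset.range (t + 1), survive K A s x ≤ (L x : ℝ≥0∞) / p := by
    intro t
    induction t with
    | zero =>
      intro x hG
      rw [Finset.sum_range_one]
      by_cases hA : A x
      · simp [survive, hA]
      · simp only [survive, hA, if_false]
        rw [ENNReal.le_div_iff_mul_le (Or.inl hp0) (Or.inl hptop), one_mul]
        exact hpleL x hG hA
    | succ t ih =>
      intro x hG
      by_cases hA : A x
      · have hz : ∀ s, survive K A s x = 0 := by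
          intro s; cases s <;> simp [survive, hA]
        simp [hz]
      · rw [Finset.sum_range_succ']
        have h0 : survive K A 0 x = 1 := by simp [survive, hA]
        have hs : ∀ s, survive K A (s + 1) x = ∑' y, K x y * survive K A s y := by
          intro s; simp [survive, hA]
        rw [h0]
        calc (∑ s ∈ Finset.range (t + 1), survive K A (s + 1) x) + 1
            = (∑ s ∈ Finset.range (t + 1), ∑' y, K x y * survive K A s y) + 1 := by
              congr 1; exact Finset.sum_congr rfl fun s _ => hs s
          _ = (∑' y, K x y * ∑ s ∈ Finset.range (t + 1), survive K A s y) + 1 := by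
              congr 1
              rw [← Summable.tsum_finsetSum fun s _ => ENNReal.summable]
              congr 1; ext y
              rw [Finset.mul_sum]
          _ ≤ (∑' y, K x y * ((L y : ℝ≥0∞) / p)) + 1 := by
              refine add_le_add ?_ le_rfl
              apply ENNReal.tsum_le_tsum
              intro y
              by_cases hK : K x y = 0
              · simp [hK]
              · exact mul_le_mul_right (ih y (hinv x hG hA y hK).1) _
          _ = (∑' y, K x y * (L y : ℝ≥0∞)) / p + 1 := by
              congr 1
              rw [ENNReal.div_eq_inv_mul]
              rw [← ENNReal.tsum_mul_left]
              congr 1; ext y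
              rw [ENNReal.div_eq_inv_mul]
              ring
          _ = ((∑' y, K x y * (L y : ℝ≥0∞)) + p) / p := by
              rw [ENNReal.add_div, ENNReal.div_self hp0 hptop]
          _ ≤ (L x : ℝ≥0∞) / p := by
              gcongr
              rw [add_comm]
              exact hkey x hG hA
  intro x hG
  rw [hitTime, ENNReal.tsum_eq_iSup_sum]
  apply iSup_le
  intro s
  calc ∑ t ∈ s, survive K A t x
      ≤ ∑ t ∈ Finset.range ((s.sup id) + 1), survive K A t x := by
        apply Finset.sum_le_sum_of_subset
        intro t ht
        rw [Finset.mem_range]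
        exact Nat.lt_succ_of_le (Finset.le_sup (f := id) ht)
    _ ≤ (L x : ℝ≥0∞) / p := main _ x hG


lemma kernel_exists_of_ne_zero {n : ℕ} {f : (Fin n → Bool) → ℝ} {lo hi : ℕ}
    {P Q : Finset (Fin n → Bool)} (h : moeaKernel n f lo hi P Q ≠ 0) :
    ∃ y, moeaUpdate f lo hi P y = Q := by
  by_contra hc
  push_neg at hc
  apply h
  rw [moeaKernel]
  have : ∀ x ∈ P, (∑' y, if moeaUpdate f lo hi P y = Q then pmutEA n x y else 0) = 0 := by
    intro x _
    rw [ENNReal.tsum_eq_zero]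
    intro y
    rw [if_neg (hc y)]
  rw [Finset.sum_congr rfl this]
  simp

lemma kernel_sub {n : ℕ} (hn : 1 ≤ n) (f : (Fin n → Bool) → ℝ) (lo hi : ℕ)
    {P : Finset (Fin n → Bool)} (hP : P.Nonempty) :
    ∑' Q, moeaKernel n f lo hi P Q ≤ 1 := by
  rw [tsum_fintype]
  have hPc0 : (P.card : ℝ≥0∞) ≠ 0 := Nat.cast_ne_zero.2 (Finset.card_ne_zero_of_mem hP.choose_spec)
  calc ∑ Q : Finset (Fin n → Bool), moeaKernel n f lo hi P Q
      = (P.card : ℝ≥0∞)⁻¹ * ∑ Q : Finset (Fin n → Bool),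
          ∑ x ∈ P, ∑ y : Fin n → Bool,
            (if moeaUpdate f lo hi P y = Q then pmutEA n x y else 0) := by
        rw [Finset.mul_sum]
        apply Finset.sum_congr rfl
        intro Q _
        rw [moeaKernel]
        congr 1
        apply Finset.sum_congr rfl
        intro x _
        rw [tsum_fintype]
    _ = (P.card : ℝ≥0∞)⁻¹ * ∑ x ∈ P, ∑ y : Fin n → Bool, pmutEA n x y := by
        congr 1
        rw [Finset.sum_comm]
        apply Finset.sum_congr rfl
        intro x _
        rw [Finset.sum_comm]
        apply Finset.sum_congr rfl
        intro y _
        rw [Finset.sum_ite_eq Finset.univ (moeaUpdate f lo hi P y) (fun _ => pmutEA n x y)]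
        simp
    _ = (P.card : ℝ≥0∞)⁻¹ * ∑ x ∈ P, 1 := by
        rw [Finset.sum_congr rfl (fun x _ => pmut_sum_eq hn x)]
    _ = 1 := by
        rw [Finset.sum_const, nsmul_eq_mul, mul_one]
        exact ENNReal.inv_mul_cancel hPc0 (by simp)
    _ ≤ 1 := le_rfl

lemma kernel_ge {n : ℕ} {f : (Fin n → Bool) → ℝ} {lo hi : ℕ}
    {P : Finset (Fin n → Bool)} {xs ys : Fin n → Bool} (hxs : xs ∈ P) :
    (P.card : ℝ≥0∞)⁻¹ * pmutEA n xs ys ≤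
      moeaKernel n f lo hi P (moeaUpdate f lo hi P ys) := by
  rw [moeaKernel]
  apply mul_le_mul_right
  calc pmutEA n xs ys
      = (if moeaUpdate f lo hi P ys = moeaUpdate f lo hi P ys
          then pmutEA n xs ys else 0) := by rw [if_pos rfl]
    _ ≤ ∑' y, if moeaUpdate f lo hi P y = moeaUpdate f lo hi P ys
          then pmutEA n xs y else 0 := ENNReal.le_tsum ys
    _ ≤ ∑ x ∈ P, ∑' y, if moeaUpdate f lo hi P y = moeaUpdate f lo hi P ys
          then pmutEA n x y else 0 :=
        Finset.single_le_sum
          (f := fun x => ∑' y, if moeaUpdate f lo hi P y = moeaUpdate f lo hi P ys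
            then pmutEA n x y else 0) (fun _ _ => zero_le) hxs


end Aux

/-- For maximizing a linear function with positive weights under a dynamic
uniform constraint changing from `B` to `B*` (`D = |B*−B|`), the MOEA started with the
population `{x₀}` where `x₀` is optimal for bound `B` finds a solution optimal for bound `B*`
in expected time `O(n·D²)`. -/
theorem stmt_6 :
    ∃ c : ℝ, 0 < c ∧ ∃ n₀ : ℕ, ∀ n : ℕ, n₀ ≤ n → ∀ w : Fin n → ℝ, (∀ i, 0 < w i) →
      ∀ B Bs : ℕ, B ≤ n → Bs ≤ n →
        ∀ x₀ : Fin n → Bool, optForBound w B x₀ →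
          hitTime (moeaKernel n (linF w) (min B Bs) (max B Bs))
              (fun P => ∃ x ∈ P, optForBound w Bs x) {x₀} ≤
            ENNReal.ofReal (c * n * (Nat.dist B Bs : ℝ) ^ 2) := by
  refine ⟨8, by norm_num, 1, ?_⟩
  intro n hn w hw B Bs hB hBs x₀ hx₀
  set lo := min B Bs with hlo
  set hi := max B Bs with hhi
  set D := Nat.dist B Bs with hD
  have hdist : D = hi - lo := by rw [hD, Nat.dist]; omega
  have hlole : lo ≤ hi := min_le_max
  have hloBs : lo ≤ Bs := min_le_right _ _
  have hBshi : Bs ≤ hi := le_max_right _ _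
  have hhin : hi ≤ n := max_le hB hBs
  set e : ℕ := (D + 1) * n * 4 with he
  have he0 : (e : ℝ≥0∞) ≠ 0 := Nat.cast_ne_zero.2 (by positivity)
  have hetop : (e : ℝ≥0∞) ≠ ⊤ := ENNReal.natCast_ne_top e
  set p : ℝ≥0∞ := (e : ℝ≥0∞)⁻¹ with hp
  have hp0 : p ≠ 0 := ENNReal.inv_ne_zero.2 hetop
  have hptop : p ≠ ⊤ := ENNReal.inv_ne_top.2 he0
  have hpfactor : p = ((D + 1 : ℕ) : ℝ≥0∞)⁻¹ * ((n : ℝ≥0∞)⁻¹ * 4⁻¹) := by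
    rw [hp, he, Nat.cast_mul, Nat.cast_mul,
      ENNReal.mul_inv (Or.inr (by simp)) (Or.inr (by simp)),
      ENNReal.mul_inv (Or.inr (ENNReal.natCast_ne_top n))
        (Or.inl (ENNReal.natCast_ne_top (D + 1)))]
    norm_num
    ring
  have hGood : Aux.Good w lo hi ({x₀} : Finset (Fin n → Bool)) := by
    have hones : ones x₀ = B := Aux.ones_eq_of_opt hw hB hx₀
    refine ⟨?_, ?_, x₀, Finset.mem_singleton_self x₀, Aux.opt_self_of_opt hw hB hx₀⟩
    · intro x hx
      rw [Finset.mem_singleton] at hx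
      subst hx
      rw [hones]
      exact ⟨min_le_left _ _, le_max_left _ _⟩
    · intro a ha b hb _
      rw [Finset.coe_singleton, Set.mem_singleton_iff] at ha hb
      rw [ha, hb]
  have hsub : ∀ P, Aux.Good w lo hi P → ¬(∃ x ∈ P, optForBound w Bs x) →
      ∑' Q, moeaKernel n (linF w) lo hi P Q ≤ 1 := by
    intro P hG _
    obtain ⟨x, hxP, _⟩ := hG.2.2
    exact Aux.kernel_sub hn (linF w) lo hi ⟨x, hxP⟩
  have hinv : ∀ P, Aux.Good w lo hi P → ¬(∃ x ∈ P, optForBound w Bs x) →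
      ∀ Q, moeaKernel n (linF w) lo hi P Q ≠ 0 →
        Aux.Good w lo hi Q ∧ Aux.lev w Bs Q ≤ Aux.lev w Bs P := by
    intro P hG _ Q hK
    obtain ⟨y, hy⟩ := Aux.kernel_exists_of_ne_zero hK
    rw [← hy]
    exact ⟨Aux.good_update hG y, Aux.lev_update_le hG y⟩
  have hprog : ∀ P, Aux.Good w lo hi P → ¬(∃ x ∈ P, optForBound w Bs x) →
      p ≤ ∑' Q, if Aux.lev w Bs Q < Aux.lev w Bs P
        then moeaKernel n (linF w) lo hi P Q else 0 := by
    intro P hG hA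
    obtain ⟨xs, hxsP, ys, hd1, hlt⟩ := Aux.progress hw hloBs hBshi hhin hG hA
    have hcard : (P.card : ℝ≥0∞) ≤ ((D + 1 : ℕ) : ℝ≥0∞) := by
      exact_mod_cast le_trans (Aux.card_le_of_good hG) (by omega)
    calc p = ((D + 1 : ℕ) : ℝ≥0∞)⁻¹ * ((n : ℝ≥0∞)⁻¹ * 4⁻¹) := hpfactor
      _ ≤ (P.card : ℝ≥0∞)⁻¹ * pmutEA n xs ys :=
          mul_le_mul' (ENNReal.inv_le_inv' hcard) (Aux.pmut_single_flip hn hd1)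
      _ ≤ moeaKernel n (linF w) lo hi P (moeaUpdate (linF w) lo hi P ys) :=
          Aux.kernel_ge hxsP
      _ = (if Aux.lev w Bs (moeaUpdate (linF w) lo hi P ys) < Aux.lev w Bs P
            then moeaKernel n (linF w) lo hi P (moeaUpdate (linF w) lo hi P ys) else 0) :=
          (if_pos hlt).symm
      _ ≤ ∑' Q, if Aux.lev w Bs Q < Aux.lev w Bs P
            then moeaKernel n (linF w) lo hi P Q else 0 :=
          ENNReal.le_tsum (moeaUpdate (linF w) lo hi P ys)
  have hfin := Aux.drift (moeaKernel n (linF w) lo hi)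
    (fun P => ∃ x ∈ P, optForBound w Bs x) (Aux.Good w lo hi) (Aux.lev w Bs)
    p hp0 hptop hsub hinv hprog {x₀} hGood
  refine le_trans hfin ?_
  have hlev : Aux.lev w Bs {x₀} ≤ D := by
    have := Aux.lev_le (Bs := Bs) (Finset.mem_singleton_self x₀)
      (Aux.opt_self_of_opt hw hB hx₀)
    rwa [Aux.ones_eq_of_opt hw hB hx₀] at this
  have hnat : D * e ≤ 8 * n * D ^ 2 := by
    rcases Nat.eq_zero_or_pos D with h0 | hDpos
    · simp [h0]
    · calc D * e = 4 * n * (D * D) + 4 * n * D := by rw [he]; ring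
        _ ≤ 4 * n * (D * D) + 4 * n * (D * D) := by
            gcongr
            exact Nat.le_mul_of_pos_left D hDpos
        _ = 8 * n * D ^ 2 := by ring
  calc (Aux.lev w Bs {x₀} : ℝ≥0∞) / p ≤ (D : ℝ≥0∞) / p :=
        ENNReal.div_le_div_right (Nat.cast_le.2 hlev) _
    _ = ((D * e : ℕ) : ℝ≥0∞) := by rw [div_eq_mul_inv, hp, inv_inv]; push_cast; ring
    _ ≤ ((8 * n * D ^ 2 : ℕ) : ℝ≥0∞) := Nat.cast_le.2 hnat
    _ = ENNReal.ofReal ((8 : ℝ) * n * (D : ℝ) ^ 2) := by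
        rw [← ENNReal.ofReal_natCast]
        congr 1
        push_cast
        ring

end
end

section
/- For the dynamic vertex cover problem, where a single edge is added to or deleted from the graph, RLS using the edge-based representation and fitness function f_e, starting from a search point that is a maximal matching (hence a 2-approximate vertex cover) of the instance before the change, finds a maximal matching, inducing a 2-approximate vertex cover of the new instance, in expected time O(m). -/
open scoped ENNReal
open Classical

noncomputable section

/-- Standard bit mutation on bit strings indexed by an arbitrary finite type:
each position is flipped independently with probability `1/m` where `m` is the
number of positions. -/
def pmutEAg {α : Type*} [Fintype α] [DecidableEq α] (x y : α → Bool) : ℝ≥0∞ :=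
  ((Fintype.card α : ℝ≥0∞)⁻¹) ^ hammingDist x y *
    (1 - (Fintype.card α : ℝ≥0∞)⁻¹) ^ (Fintype.card α - hammingDist x y)

/-- RLS mutation on bit strings indexed by an arbitrary finite type:
exactly one position, chosen uniformly at random, is flipped. -/
def pmutRLSg {α : Type*} [Fintype α] [DecidableEq α] (x y : α → Bool) : ℝ≥0∞ :=
  if hammingDist x y = 1 then (Fintype.card α : ℝ≥0∞)⁻¹ else 0

variable {V : Type} [Fintype V] [DecidableEq V]

/-- The set `E(x)` of edges chosen by the search point `x` in the edge-based representation. -/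
def chosenE (G : SimpleGraph V) [DecidableRel G.Adj] (x : G.edgeFinset → Bool) :
    Finset (Sym2 V) :=
  (Finset.univ.filter fun e : G.edgeFinset => x e = true).image Subtype.val

/-- The cover set `V_C(x)`: all vertices adjacent to at least one chosen edge. -/
def coverSet (G : SimpleGraph V) [DecidableRel G.Adj] (x : G.edgeFinset → Bool) : Finset V :=
  Finset.univ.filter fun v => ∃ e ∈ chosenE G x, v ∈ e

/-- The fitness function `f_e` of the edge-based approach (to be minimized). -/
def fVC (G : SimpleGraph V) [DecidableRel G.Adj] (x : G.edgeFinset → Bool) : ℕ :=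
  (coverSet G x).card +
    (Fintype.card V + 1) *
      (G.edgeFinset.filter fun e => ¬∃ v ∈ coverSet G x, v ∈ e).card +
    (Fintype.card V + 1) * (G.edgeFinset.card + 1) *
      ((chosenE G x ×ˢ chosenE G x).filter fun p =>
        p.1 ≠ p.2 ∧ ∃ v : V, v ∈ p.1 ∧ v ∈ p.2).card

/-- A set of edges is a matching if no two distinct edges of it share a vertex. -/
def IsMatchingSet (s : Finset (Sym2 V)) : Prop :=
  ∀ e ∈ s, ∀ e' ∈ s, e ≠ e' → ∀ v : V, ¬(v ∈ e ∧ v ∈ e')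

/-- `s` is a maximal matching of `G`: a matching consisting of edges of `G` such that every
edge of `G` shares a vertex with some edge of `s`. -/
def IsMaximalMatchingOf (G : SimpleGraph V) [DecidableRel G.Adj]
    (s : Finset (Sym2 V)) : Prop :=
  s ⊆ G.edgeFinset ∧ IsMatchingSet s ∧
    ∀ e ∈ G.edgeFinset, ∃ e' ∈ s, ∃ v : V, v ∈ e ∧ v ∈ e'

/-- `C` is a vertex cover of `G`. -/
def IsVertexCover (G : SimpleGraph V) [DecidableRel G.Adj] (C : Finset V) : Prop :=
  ∀ e ∈ G.edgeFinset, ∃ v ∈ C, v ∈ e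

/-- The dynamic-change hypothesis: the new graph `G'` is obtained from the old graph `G` by
adding or deleting the single edge `e`, and the initial search point `x₀` (over the edges of
`G'`) chooses a maximal matching of the old graph `G` (in the deletion case, a maximal
matching of `G` with the deleted edge removed). -/
def DynVCStart {V : Type} [Fintype V] [DecidableEq V]
    (G G' : SimpleGraph V) [DecidableRel G.Adj] [DecidableRel G'.Adj]
    (e : Sym2 V) (x₀ : G'.edgeFinset → Bool) : Prop :=
  (G'.edgeFinset = insert e G.edgeFinset ∧ e ∉ G.edgeFinset ∧
      IsMaximalMatchingOf G (chosenE G' x₀)) ∨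
    (G.edgeFinset = insert e G'.edgeFinset ∧ e ∉ G'.edgeFinset ∧
      ∃ M : Finset (Sym2 V), IsMaximalMatchingOf G M ∧ chosenE G' x₀ = M.erase e)

section Aux
set_option linter.unusedSectionVars false
set_option linter.unusedVariables false

lemma ennreal_step (p q r a b : ℝ≥0∞) (hpq : p ≤ q) (hqr : q + r = 1) (hab : a ≤ b) :
    q * a + r * b ≤ p * a + (1 - p) * b := by
  have hq1 : q ≤ 1 := hqr ▸ le_self_add
  have hqt : q ≠ ∞ := (hq1.trans_lt ENNReal.one_lt_top).ne
  have hpt : p ≠ ∞ := ((hpq.trans hq1).trans_lt ENNReal.one_lt_top).ne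
  have hr : r = 1 - q := ENNReal.eq_sub_of_add_eq hqt (by rw [add_comm]; exact hqr)
  have hq : q = p + (q - p) := (add_tsub_cancel_of_le hpq).symm
  have hsum : (q - p) + r = 1 - p := by
    refine ENNReal.eq_sub_of_add_eq hpt ?_
    rw [hr, add_right_comm, tsub_add_cancel_of_le hpq, add_comm, tsub_add_cancel_of_le hq1]
  calc q * a + r * b = p * a + ((q - p) * a + r * b) := by
        rw [← add_assoc, ← add_mul, add_tsub_cancel_of_le hpq]
    _ ≤ p * a + ((q - p) * b + r * b) := by
        gcongr
    _ = p * a + (1 - p) * b := by rw [← add_mul, hsum]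

theorem hitTime_le_of_potential {S : Type*} (K : S → S → ℝ≥0∞) (A : S → Prop)
    (Inv : S → Prop) (Φ : S → ℕ) (N : ℕ) (p : ℝ≥0∞)
    (hp0 : p ≠ 0) (hp1 : p ≤ 1)
    (hK : ∀ x, ∑' y, K x y = 1)
    (hInv : ∀ x y, Inv x → ¬A x → K x y ≠ 0 → Inv y ∧ Φ y ≤ Φ x)
    (hN : ∀ x, Inv x → Φ x ≤ N)
    (hprog : ∀ x, Inv x → ¬A x → p ≤ ∑' y, if Φ y < Φ x then K x y else 0)
    (x₀ : S) (h0 : Inv x₀) :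
    hitTime K A x₀ ≤ N / p := by
  have key : ∀ T : ℕ, ∀ x, Inv x →
      ∑ t ∈ Finset.range T, survive K A t x ≤ (Φ x : ℝ≥0∞) / p := by
    intro T
    induction T with
    | zero => intro x _; simp
    | succ T ih =>
      intro x hx
      by_cases hA : A x
      · have hz : ∀ t, survive K A t x = 0 := by
          intro t; cases t <;> simp [survive, hA]
        simp [hz]
      have hΦ1 : 1 ≤ Φ x := by
        by_contra h
        have hΦ0 : Φ x = 0 := by omega
        have hv := hprog x hx hA
        rw [hΦ0] at hv
        simp only [Nat.not_lt_zero, if_false, tsum_zero, le_zero_iff] at hv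
        exact hp0 hv
      set F := fun y => ∑ t ∈ Finset.range T, survive K A t y with hF
      have hsum : ∑ t ∈ Finset.range (T+1), survive K A t x
          = 1 + ∑' y, K x y * F y := by
        rw [Finset.sum_range_succ']
        have h00 : survive K A 0 x = 1 := by simp [survive, hA]
        have hs : ∀ t, survive K A (t+1) x = ∑' y, K x y * survive K A t y := by
          intro t; simp [survive, hA]
        simp only [hs, h00]
        rw [add_comm]
        congr 1
        rw [← Summable.tsum_finsetSum (fun i _ => ENNReal.summable)]
        congr 1; funext y
        rw [hF]; rw [Finset.mul_sum]
      have hsplit : ∑' y, K x y * F y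
          = (∑' y, if Φ y < Φ x then K x y * F y else 0)
            + ∑' y, if Φ y < Φ x then 0 else K x y * F y := by
        rw [← ENNReal.tsum_add]; congr 1; funext y; split <;> simp
      set a : ℝ≥0∞ := ((Φ x - 1 : ℕ) : ℝ≥0∞) / p with ha
      set b : ℝ≥0∞ := ((Φ x : ℕ) : ℝ≥0∞) / p with hb
      set q : ℝ≥0∞ := ∑' y, if Φ y < Φ x then K x y else 0 with hqdef
      set r : ℝ≥0∞ := ∑' y, if Φ y < Φ x then 0 else K x y with hrdef
      have hb1 : (∑' y, if Φ y < Φ x then K x y * F y else 0) ≤ q * a := by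
        rw [hqdef, ← ENNReal.tsum_mul_right]
        apply ENNReal.tsum_le_tsum
        intro y
        split
        · rename_i hlt
          by_cases hKy : K x y = 0
          · simp [hKy]
          · have hy := hInv x y hx hA hKy
            refine mul_le_mul_right ((ih y hy.1).trans ?_) _
            apply ENNReal.div_le_div_right
            exact Nat.cast_le.mpr (by omega)
        · simp
      have hb2 : (∑' y, if Φ y < Φ x then 0 else K x y * F y) ≤ r * b := by
        rw [hrdef, ← ENNReal.tsum_mul_right]
        apply ENNReal.tsum_le_tsum
        intro y
        split
        · simp
        · by_cases hKy : K x y = 0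
          · simp [hKy]
          · have hy := hInv x y hx hA hKy
            refine mul_le_mul_right ((ih y hy.1).trans ?_) _
            apply ENNReal.div_le_div_right
            exact Nat.cast_le.mpr hy.2
      have hqr : q + r = 1 := by
        rw [hqdef, hrdef, ← ENNReal.tsum_add, ← hK x]
        congr 1; funext y; split <;> simp
      have hpq : p ≤ q := hprog x hx hA
      have hab : a ≤ b := by
        apply ENNReal.div_le_div_right
        exact Nat.cast_le.mpr (by omega)
      have hbt : b ≠ ∞ := by
        rw [hb]
        exact (ENNReal.div_lt_top (ENNReal.natCast_ne_top _) hp0).ne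
      have hpa : p * a = ((Φ x - 1 : ℕ) : ℝ≥0∞) := by
        rw [ha, ENNReal.mul_div_cancel hp0 (hp1.trans_lt ENNReal.one_lt_top).ne]
      have hpb : p * b = ((Φ x : ℕ) : ℝ≥0∞) := by
        rw [hb, ENNReal.mul_div_cancel hp0 (hp1.trans_lt ENNReal.one_lt_top).ne]
      have h1pb : (1 - p) * b = b - (Φ x : ℝ≥0∞) := by
        rw [ENNReal.sub_mul (fun _ _ => hbt), one_mul, hpb]
      have hkb : ((Φ x : ℕ) : ℝ≥0∞) ≤ b := by
        rw [hb, ENNReal.le_div_iff_mul_le (Or.inl hp0) (Or.inr (ENNReal.natCast_ne_top _))]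
        calc ((Φ x : ℕ) : ℝ≥0∞) * p ≤ ((Φ x : ℕ) : ℝ≥0∞) * 1 := by gcongr
          _ = _ := mul_one _
      calc ∑ t ∈ Finset.range (T+1), survive K A t x
          = 1 + ∑' y, K x y * F y := hsum
        _ ≤ 1 + (q * a + r * b) := by rw [hsplit]; gcongr
        _ ≤ 1 + (p * a + (1 - p) * b) :=
            add_le_add_right (ennreal_step p q r a b hpq hqr hab) 1
        _ = 1 + (((Φ x - 1 : ℕ) : ℝ≥0∞) + (b - (Φ x : ℝ≥0∞))) := by rw [hpa, h1pb]
        _ = ((Φ x : ℕ) : ℝ≥0∞) + (b - (Φ x : ℝ≥0∞)) := by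
            rw [← add_assoc]
            congr 1
            have h : 1 + (Φ x - 1) = Φ x := by omega
            exact_mod_cast h
        _ = b := add_tsub_cancel_of_le hkb
  rw [hitTime, ENNReal.tsum_eq_iSup_sum]
  apply iSup_le
  intro s
  calc ∑ t ∈ s, survive K A t x₀
      ≤ ∑ t ∈ Finset.range (s.sup id + 1), survive K A t x₀ := by
        apply Finset.sum_le_sum_of_subset
        intro t ht
        simp only [Finset.mem_range]
        exact Nat.lt_succ_of_le (Finset.le_sup (f := id) ht)
    _ ≤ (Φ x₀ : ℝ≥0∞) / p := key _ x₀ h0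
    _ ≤ (N : ℝ≥0∞) / p := by
        apply ENNReal.div_le_div_right
        exact Nat.cast_le.mpr (hN x₀ h0)

section Kern
variable {α : Type*} [Fintype α] [DecidableEq α]

lemma hammingDist_flip (x : α → Bool) (i : α) :
    hammingDist x (Function.update x i (!x i)) = 1 := by
  unfold hammingDist
  rw [Finset.card_eq_one]
  refine ⟨i, ?_⟩
  ext j
  simp only [Finset.mem_filter, Finset.mem_univ, true_and, Finset.mem_singleton,
    Function.update_apply]
  by_cases h : j = i <;> simp [h]

lemma eq_flip_of_hammingDist_one {x z : α → Bool} (h : hammingDist x z = 1) :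
    ∃ i, z = Function.update x i (!x i) := by
  unfold hammingDist at h
  rw [Finset.card_eq_one] at h
  obtain ⟨i, hi⟩ := h
  refine ⟨i, ?_⟩
  funext j
  by_cases hj : j = i
  · subst hj
    have : x j ≠ z j := by
      have : j ∈ Finset.univ.filter fun k => x k ≠ z k := by rw [hi]; simp
      simpa using this
    simp only [Function.update_self]
    revert this; cases x j <;> cases z j <;> simp
  · have : ¬(x j ≠ z j) := by
      intro hne
      have : j ∈ Finset.univ.filter fun k => x k ≠ z k := by simpa using hne
      rw [hi] at this; simp at this; exact hj this
    rw [Function.update_of_ne hj]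
    exact (not_not.mp this).symm

lemma flip_injective (x : α → Bool) :
    Function.Injective (fun i => Function.update x i (!x i)) := by
  intro i j hij
  by_contra hne
  have h2 := congrFun hij i
  simp only [Function.update_self, Function.update_of_ne hne] at h2
  revert h2; cases x i <;> simp

lemma filter_dist_one (x : α → Bool) :
    (Finset.univ.filter fun z : α → Bool => hammingDist x z = 1)
      = Finset.univ.image (fun i => Function.update x i (!x i)) := by
  ext z
  simp only [Finset.mem_filter, Finset.mem_univ, true_and, Finset.mem_image]
  constructor
  · intro h
    obtain ⟨i, hi⟩ := eq_flip_of_hammingDist_one h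
    exact ⟨i, hi.symm⟩
  · rintro ⟨i, rfl⟩
    exact hammingDist_flip x i

lemma tsum_pmutRLSg [Nonempty α] (x : α → Bool) : ∑' z, pmutRLSg x z = 1 := by
  rw [tsum_fintype]
  unfold pmutRLSg
  rw [← Finset.sum_filter, filter_dist_one,
    Finset.sum_image (fun a _ b _ h => flip_injective x h), Finset.sum_const,
    Finset.card_univ, nsmul_eq_mul]
  exact ENNReal.mul_inv_cancel (by exact_mod_cast Fintype.card_ne_zero)
    (ENNReal.natCast_ne_top _)

variable (acc : (α → Bool) → (α → Bool) → Prop)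

lemma tsum_ite_eq_left {β : Type*} (b : β) (c : ℝ≥0∞) {d : ∀ y, Decidable (b = y)} :
    ∑' y : β, (@ite _ (b = y) (d y) c 0) = c := by
  have hne : ∀ y : β, y ≠ b → (@ite _ (b = y) (d y) c 0) = 0 := by
    intro y hy
    exact if_neg (fun h : b = y => hy h.symm)
  rw [tsum_eq_single b hne]
  exact if_pos rfl

lemma eaKernel_tsum_eq_one [Nonempty α] (x : α → Bool) :
    ∑' y, eaKernel pmutRLSg acc x y = 1 := by
  unfold eaKernel
  rw [ENNReal.tsum_comm]
  exact (tsum_congr fun z => tsum_ite_eq_left _ _).trans (tsum_pmutRLSg x)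

lemma le_eaKernel (x z : α → Bool) (h1 : hammingDist x z = 1) (hacc : acc x z) :
    (Fintype.card α : ℝ≥0∞)⁻¹ ≤ eaKernel pmutRLSg acc x z := by
  unfold eaKernel
  have h := ENNReal.le_tsum
    (f := fun w => if (if acc x w then w else x) = z then pmutRLSg x w else 0) z
  simp [hacc, pmutRLSg, h1] at h ⊢
  convert h

lemma eaKernel_ne_zero_cases (x y : α → Bool) (h : eaKernel pmutRLSg acc x y ≠ 0) :
    y = x ∨ (hammingDist x y = 1 ∧ acc x y) := by
  unfold eaKernel at h
  rw [Ne, ENNReal.tsum_eq_zero, not_forall] at h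
  obtain ⟨z, hz⟩ := h
  by_cases hsel : (if acc x z then z else x) = y
  · rw [if_pos hsel] at hz
    have hd : hammingDist x z = 1 := by
      by_contra hd; simp [pmutRLSg, hd] at hz
    by_cases ha : acc x z
    · rw [if_pos ha] at hsel; subst hsel; right; exact ⟨hd, ha⟩
    · rw [if_neg ha] at hsel; left; exact hsel.symm
  · rw [if_neg hsel] at hz; exact absurd rfl hz

end Kern
end Aux

section Aux2
set_option linter.unusedSectionVars false
set_option linter.unusedVariables false

/-! basic helpers -/

lemma sym2_exists_mem (e : Sym2 V) : ∃ v : V, v ∈ e := by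
  obtain ⟨⟨a, b⟩, rfl⟩ := Quot.exists_rep e
  exact ⟨a, by simp [Sym2.mem_iff]⟩

lemma card_verts_le_two (e : Sym2 V) : (Finset.univ.filter fun v : V => v ∈ e).card ≤ 2 := by
  obtain ⟨⟨a, b⟩, rfl⟩ := Quot.exists_rep e
  have hsub : (Finset.univ.filter fun v : V => v ∈ (Quot.mk _ (a, b) : Sym2 V)) ⊆ {a, b} := by
    intro v hv
    simp only [Finset.mem_filter] at hv
    have : v ∈ s(a, b) := hv.2
    rw [Sym2.mem_iff] at this
    simpa [Finset.mem_insert, Finset.mem_singleton] using this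
  calc _ ≤ ({a, b} : Finset V).card := Finset.card_le_card hsub
    _ ≤ 2 := Finset.card_le_two

variable (G : SimpleGraph V) [DecidableRel G.Adj]

def uncov (x : G.edgeFinset → Bool) : Finset (Sym2 V) :=
  G.edgeFinset.filter fun e => ¬∃ v ∈ coverSet G x, v ∈ e

lemma mem_chosenE {x : G.edgeFinset → Bool} {e : Sym2 V} :
    e ∈ chosenE G x ↔ ∃ h : e ∈ G.edgeFinset, x ⟨e, h⟩ = true := by
  simp only [chosenE, Finset.mem_image, Finset.mem_filter, Finset.mem_univ, true_and]
  constructor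
  · rintro ⟨i, hxi, rfl⟩; exact ⟨i.2, hxi⟩
  · rintro ⟨h, hx⟩; exact ⟨⟨e, h⟩, hx, rfl⟩

lemma chosenE_subset (x : G.edgeFinset → Bool) : chosenE G x ⊆ G.edgeFinset := by
  intro e he
  exact ((mem_chosenE G).mp he).1

lemma mem_coverSet {x : G.edgeFinset → Bool} {v : V} :
    v ∈ coverSet G x ↔ ∃ e ∈ chosenE G x, v ∈ e := by
  simp [coverSet]

lemma coverSet_mono {x y : G.edgeFinset → Bool} (h : chosenE G x ⊆ chosenE G y) :
    coverSet G x ⊆ coverSet G y := by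
  intro v hv
  rw [mem_coverSet] at hv ⊢
  obtain ⟨e, he, hve⟩ := hv
  exact ⟨e, h he, hve⟩

lemma uncov_anti {x y : G.edgeFinset → Bool} (h : coverSet G x ⊆ coverSet G y) :
    uncov G y ⊆ uncov G x := by
  intro e he
  rw [uncov, Finset.mem_filter] at he ⊢
  refine ⟨he.1, fun ⟨v, hv, hve⟩ => he.2 ⟨v, h hv, hve⟩⟩

lemma chosenE_update_true (x : G.edgeFinset → Bool) (i : G.edgeFinset) :
    chosenE G (Function.update x i true) = insert (i : Sym2 V) (chosenE G x) := by
  ext e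
  simp only [mem_chosenE, Finset.mem_insert]
  constructor
  · rintro ⟨h, hx⟩
    rw [Function.update_apply] at hx
    by_cases he : (⟨e, h⟩ : G.edgeFinset) = i
    · left; rw [← he]
    · right; rw [if_neg he] at hx; exact ⟨h, hx⟩
  · rintro (rfl | ⟨h, hx⟩)
    · refine ⟨i.2, ?_⟩
      have : (⟨(i : Sym2 V), i.2⟩ : G.edgeFinset) = i := rfl
      rw [this, Function.update_self]
    · refine ⟨h, ?_⟩
      rw [Function.update_apply]
      split
      · rfl
      · exact hx

lemma chosenE_update_false (x : G.edgeFinset → Bool) (i : G.edgeFinset) :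
    chosenE G (Function.update x i false) = (chosenE G x).erase (i : Sym2 V) := by
  ext e
  simp only [mem_chosenE, Finset.mem_erase]
  constructor
  · rintro ⟨h, hx⟩
    rw [Function.update_apply] at hx
    by_cases he : (⟨e, h⟩ : G.edgeFinset) = i
    · rw [if_pos he] at hx; cases hx
    · rw [if_neg he] at hx
      exact ⟨fun hev => he (Subtype.ext hev), h, hx⟩
  · rintro ⟨hne, h, hx⟩
    refine ⟨h, ?_⟩
    rw [Function.update_apply, if_neg (fun hh => hne (congrArg Subtype.val hh))]
    exact hx

lemma collisions_eq_empty {s : Finset (Sym2 V)} (hm : IsMatchingSet s) :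
    ((s ×ˢ s).filter fun p => p.1 ≠ p.2 ∧ ∃ v : V, v ∈ p.1 ∧ v ∈ p.2) = ∅ := by
  rw [Finset.filter_eq_empty_iff]
  rintro ⟨e1, e2⟩ hp
  rw [Finset.mem_product] at hp
  rintro ⟨hne, v, hv1, hv2⟩
  exact hm e1 hp.1 e2 hp.2 hne v ⟨hv1, hv2⟩

lemma matching_subset {s t : Finset (Sym2 V)} (h : s ⊆ t) (hm : IsMatchingSet t) :
    IsMatchingSet s :=
  fun e he e' he' hne v hv => hm e (h he) e' (h he') hne v hv

lemma fVC_eq_of_matching {x : G.edgeFinset → Bool} (hm : IsMatchingSet (chosenE G x)) :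
    fVC G x = (coverSet G x).card + (Fintype.card V + 1) * (uncov G x).card := by
  rw [fVC, collisions_eq_empty hm]
  simp [uncov]

lemma card_V_pos (i : G.edgeFinset) : 1 ≤ Fintype.card V := by
  obtain ⟨v, -⟩ := sym2_exists_mem (i : Sym2 V)
  exact Fintype.card_pos_iff.mpr ⟨v⟩

lemma not_mem_chosenE_of_false {x : G.edgeFinset → Bool} {i : G.edgeFinset}
    (hxi : x i = false) : (i : Sym2 V) ∉ chosenE G x := by
  rw [mem_chosenE]
  rintro ⟨h, hx⟩
  have : (⟨(i : Sym2 V), h⟩ : G.edgeFinset) = i := rfl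
  rw [this, hxi] at hx
  cases hx

lemma mem_chosenE_of_true {x : G.edgeFinset → Bool} {i : G.edgeFinset}
    (hxi : x i = true) : (i : Sym2 V) ∈ chosenE G x := by
  rw [mem_chosenE]
  exact ⟨i.2, hxi⟩

/-- Q1: flipping on an uncovered edge is accepted, keeps the matching property, and removes
that edge from the uncovered set. -/
lemma accept_uncov_add {x : G.edgeFinset → Bool} {i : G.edgeFinset}
    (hm : IsMatchingSet (chosenE G x)) (hxi : x i = false)
    (hu : (i : Sym2 V) ∈ uncov G x) :
    fVC G (Function.update x i true) ≤ fVC G x ∧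
      IsMatchingSet (chosenE G (Function.update x i true)) ∧
      uncov G (Function.update x i true) ⊆ (uncov G x).erase (i : Sym2 V) := by
  set y := Function.update x i true with hy
  have hch : chosenE G y = insert (i : Sym2 V) (chosenE G x) := chosenE_update_true G x i
  have hiu : ¬∃ v ∈ coverSet G x, v ∈ (i : Sym2 V) := by
    rw [uncov, Finset.mem_filter] at hu; exact hu.2
  have hdisj : ∀ e' ∈ chosenE G x, ∀ v : V, ¬(v ∈ (i : Sym2 V) ∧ v ∈ e') := by
    rintro e' he' v ⟨hvi, hve⟩
    exact hiu ⟨v, (mem_coverSet G).mpr ⟨e', he', hve⟩, hvi⟩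
  have hmy : IsMatchingSet (chosenE G y) := by
    rw [hch]
    intro e1 h1 e2 h2 hne v hv
    rw [Finset.mem_insert] at h1 h2
    rcases h1 with rfl | h1
    · rcases h2 with rfl | h2
      · exact hne rfl
      · exact hdisj e2 h2 v hv
    · rcases h2 with rfl | h2
      · exact hdisj e1 h1 v ⟨hv.2, hv.1⟩
      · exact hm e1 h1 e2 h2 hne v hv
  have hcovsub : coverSet G y ⊆ coverSet G x ∪ (Finset.univ.filter fun v : V => v ∈ (i : Sym2 V)) := by
    intro v hv
    rw [mem_coverSet] at hv
    obtain ⟨e', he', hve⟩ := hv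
    rw [hch, Finset.mem_insert] at he'
    rw [Finset.mem_union]
    rcases he' with rfl | he'
    · right; simp [hve]
    · left; exact (mem_coverSet G).mpr ⟨e', he', hve⟩
  have hcovcard : (coverSet G y).card ≤ (coverSet G x).card + 2 := by
    calc (coverSet G y).card ≤ _ := Finset.card_le_card hcovsub
      _ ≤ (coverSet G x).card + (Finset.univ.filter fun v : V => v ∈ (i : Sym2 V)).card :=
          Finset.card_union_le _ _
      _ ≤ (coverSet G x).card + 2 := by
          have := card_verts_le_two (V := V) (i : Sym2 V)
          omega
  have hcovmono : coverSet G x ⊆ coverSet G y := by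
    apply coverSet_mono
    rw [hch]
    exact Finset.subset_insert _ _
  have huncovsub : uncov G y ⊆ (uncov G x).erase (i : Sym2 V) := by
    intro e' he'
    have he'x : e' ∈ uncov G x := uncov_anti G hcovmono he'
    rw [Finset.mem_erase]
    refine ⟨?_, he'x⟩
    intro heq
    rw [uncov, Finset.mem_filter, heq] at he'
    obtain ⟨v, hvi⟩ := sym2_exists_mem (i : Sym2 V)
    refine he'.2 ⟨v, ?_, hvi⟩
    exact (mem_coverSet G).mpr ⟨(i : Sym2 V), by rw [hch]; exact Finset.mem_insert_self _ _, hvi⟩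
  have hucard : (uncov G y).card + 1 ≤ (uncov G x).card := by
    have h1 : (uncov G y).card ≤ ((uncov G x).erase (i : Sym2 V)).card :=
      Finset.card_le_card huncovsub
    rw [Finset.card_erase_of_mem hu] at h1
    have h2 : 1 ≤ (uncov G x).card := Finset.card_pos.mpr ⟨_, hu⟩
    omega
  refine ⟨?_, hmy, huncovsub⟩
  rw [fVC_eq_of_matching G hm, fVC_eq_of_matching G hmy]
  have hn : 1 ≤ Fintype.card V := card_V_pos G i
  have hmul : (Fintype.card V + 1) * (uncov G y).card + (Fintype.card V + 1)
      ≤ (Fintype.card V + 1) * (uncov G x).card := by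
    have := Nat.mul_le_mul_left (Fintype.card V + 1) hucard
    rw [Nat.mul_add, Nat.mul_one] at this
    exact this
  set A := (Fintype.card V + 1) * (uncov G y).card
  set B := (Fintype.card V + 1) * (uncov G x).card
  omega

/-- Q2: flipping on a covered non-chosen edge is rejected. -/
lemma reject_cov_add {x : G.edgeFinset → Bool} {i : G.edgeFinset}
    (hm : IsMatchingSet (chosenE G x)) (hxi : x i = false)
    (hu : (i : Sym2 V) ∉ uncov G x) :
    fVC G x < fVC G (Function.update x i true) := by
  set y := Function.update x i true with hy
  have hch : chosenE G y = insert (i : Sym2 V) (chosenE G x) := chosenE_update_true G x i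
  have hcov : ∃ v ∈ coverSet G x, v ∈ (i : Sym2 V) := by
    by_contra h
    exact hu (by rw [uncov, Finset.mem_filter]; exact ⟨i.2, h⟩)
  obtain ⟨v, hvc, hvi⟩ := hcov
  obtain ⟨e'', he'', hve⟩ := (mem_coverSet G).mp hvc
  have hine : (i : Sym2 V) ≠ e'' := by
    rintro rfl
    exact not_mem_chosenE_of_false G hxi he''
  have hpair : ((i : Sym2 V), e'') ∈
      ((chosenE G y ×ˢ chosenE G y).filter fun p =>
        p.1 ≠ p.2 ∧ ∃ w : V, w ∈ p.1 ∧ w ∈ p.2) := by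
    rw [Finset.mem_filter, Finset.mem_product, hch]
    exact ⟨⟨Finset.mem_insert_self _ _, Finset.mem_insert_of_mem he''⟩, hine, v, hvi, hve⟩
  have hc1 : 1 ≤ ((chosenE G y ×ˢ chosenE G y).filter fun p =>
      p.1 ≠ p.2 ∧ ∃ w : V, w ∈ p.1 ∧ w ∈ p.2).card := Finset.card_pos.mpr ⟨_, hpair⟩
  have hn : 1 ≤ Fintype.card V := card_V_pos G i
  have hcovx : (coverSet G x).card ≤ Fintype.card V := by
    rw [coverSet]
    calc _ ≤ Finset.univ.card := Finset.card_filter_le _ _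
      _ = Fintype.card V := Finset.card_univ
  have hux : (uncov G x).card ≤ G.edgeFinset.card := by
    rw [uncov]; exact Finset.card_filter_le _ _
  have hfy : (Fintype.card V + 1) * (G.edgeFinset.card + 1) ≤ fVC G y := by
    rw [fVC]
    have : (Fintype.card V + 1) * (G.edgeFinset.card + 1)
        ≤ (Fintype.card V + 1) * (G.edgeFinset.card + 1) *
          ((chosenE G y ×ˢ chosenE G y).filter fun p =>
            p.1 ≠ p.2 ∧ ∃ w : V, w ∈ p.1 ∧ w ∈ p.2).card := by
      calc (Fintype.card V + 1) * (G.edgeFinset.card + 1)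
          = (Fintype.card V + 1) * (G.edgeFinset.card + 1) * 1 := by ring
        _ ≤ _ := Nat.mul_le_mul_left _ hc1
    omega
  have hfx : fVC G x ≤ Fintype.card V + (Fintype.card V + 1) * G.edgeFinset.card := by
    rw [fVC_eq_of_matching G hm]
    have h2 : (Fintype.card V + 1) * (uncov G x).card
        ≤ (Fintype.card V + 1) * G.edgeFinset.card := Nat.mul_le_mul_left _ hux
    omega
  have hexp : (Fintype.card V + 1) * (G.edgeFinset.card + 1)
      = (Fintype.card V + 1) * G.edgeFinset.card + Fintype.card V + 1 := by ring
  set M := (Fintype.card V + 1) * G.edgeFinset.card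
  omega

/-- Q3: flipping off a chosen edge is rejected (when the chosen set is a matching). -/
lemma reject_remove {x : G.edgeFinset → Bool} {i : G.edgeFinset}
    (hm : IsMatchingSet (chosenE G x)) (hxi : x i = true) :
    fVC G x < fVC G (Function.update x i false) := by
  set y := Function.update x i false with hy
  have hch : chosenE G y = (chosenE G x).erase (i : Sym2 V) := chosenE_update_false G x i
  have hici : (i : Sym2 V) ∈ chosenE G x := mem_chosenE_of_true G hxi
  have hsub : chosenE G y ⊆ chosenE G x := by rw [hch]; exact Finset.erase_subset _ _
  have hmy : IsMatchingSet (chosenE G y) := matching_subset hsub hm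
  -- card V ≥ 2
  have hn2 : 2 ≤ Fintype.card V := by
    have hmem : (i : Sym2 V) ∈ G.edgeSet := by
      have := i.2
      rwa [SimpleGraph.mem_edgeFinset] at this
    obtain ⟨⟨a, b⟩, hab⟩ := Quot.exists_rep (i : Sym2 V)
    have hadj : G.Adj a b := by
      rw [← hab] at hmem
      exact G.mem_edgeSet.mp hmem
    exact Fintype.one_lt_card_iff.mpr ⟨a, b, hadj.ne⟩
  have hcovsub : coverSet G x ⊆ coverSet G y ∪ (Finset.univ.filter fun v : V => v ∈ (i : Sym2 V)) := by
    intro v hv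
    rw [mem_coverSet] at hv
    obtain ⟨e', he', hve⟩ := hv
    rw [Finset.mem_union]
    by_cases hei : e' = (i : Sym2 V)
    · right; subst hei; simp [hve]
    · left
      refine (mem_coverSet G).mpr ⟨e', ?_, hve⟩
      rw [hch, Finset.mem_erase]
      exact ⟨hei, he'⟩
  have hcovcard : (coverSet G x).card ≤ (coverSet G y).card + 2 := by
    calc (coverSet G x).card ≤ _ := Finset.card_le_card hcovsub
      _ ≤ (coverSet G y).card + (Finset.univ.filter fun v : V => v ∈ (i : Sym2 V)).card :=
          Finset.card_union_le _ _
      _ ≤ (coverSet G y).card + 2 := by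
          have := card_verts_le_two (V := V) (i : Sym2 V)
          omega
  have hcovmono : coverSet G y ⊆ coverSet G x := coverSet_mono G hsub
  have huncovsub : insert (i : Sym2 V) (uncov G x) ⊆ uncov G y := by
    intro e' he'
    rw [Finset.mem_insert] at he'
    rcases he' with rfl | he'
    · rw [uncov, Finset.mem_filter]
      refine ⟨i.2, ?_⟩
      rintro ⟨v, hvc, hvi⟩
      obtain ⟨e'', he'', hve⟩ := (mem_coverSet G).mp hvc
      have hne : (i : Sym2 V) ≠ e'' := by
        rintro rfl
        rw [hch, Finset.mem_erase] at he''
        exact he''.1 rfl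
      exact hm _ hici e'' (hsub he'') hne v ⟨hvi, hve⟩
    · exact uncov_anti G hcovmono he'
  have hinot : (i : Sym2 V) ∉ uncov G x := by
    rw [uncov, Finset.mem_filter]
    rintro ⟨-, hno⟩
    obtain ⟨v, hvi⟩ := sym2_exists_mem (i : Sym2 V)
    exact hno ⟨v, (mem_coverSet G).mpr ⟨_, hici, hvi⟩, hvi⟩
  have hucard : (uncov G x).card + 1 ≤ (uncov G y).card := by
    have := Finset.card_le_card huncovsub
    rw [Finset.card_insert_of_notMem hinot] at this
    omega
  rw [fVC_eq_of_matching G hm, fVC_eq_of_matching G hmy]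
  have hmul : (Fintype.card V + 1) * (uncov G x).card + (Fintype.card V + 1)
      ≤ (Fintype.card V + 1) * (uncov G y).card := by
    have := Nat.mul_le_mul_left (Fintype.card V + 1) hucard
    rw [Nat.mul_add, Nat.mul_one] at this
    exact this
  set A := (Fintype.card V + 1) * (uncov G x).card
  set B := (Fintype.card V + 1) * (uncov G y).card
  omega

-- copy from part2 for scratch purposes
lemma eq_flip_of_hammingDist_one' {α : Type*} [Fintype α] [DecidableEq α]
    {x z : α → Bool} (h : hammingDist x z = 1) :
    ∃ i, z = Function.update x i (!x i) := by
  unfold hammingDist at h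
  rw [Finset.card_eq_one] at h
  obtain ⟨i, hi⟩ := h
  refine ⟨i, ?_⟩
  funext j
  by_cases hj : j = i
  · subst hj
    have hne : x j ≠ z j := by
      have : j ∈ Finset.univ.filter fun k => x k ≠ z k := by rw [hi]; simp
      simpa using this
    simp only [Function.update_self]
    revert hne; cases x j <;> cases z j <;> simp
  · have hnn : ¬(x j ≠ z j) := by
      intro hne
      have : j ∈ Finset.univ.filter fun k => x k ≠ z k := by simpa using hne
      rw [hi] at this; simp at this; exact hj this
    rw [Function.update_of_ne hj]
    exact (not_not.mp hnn).symm

lemma hammingDist_flip' {α : Type*} [Fintype α] [DecidableEq α] (x : α → Bool) (i : α) :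
    hammingDist x (Function.update x i (!x i)) = 1 := by
  unfold hammingDist
  rw [Finset.card_eq_one]
  refine ⟨i, ?_⟩
  ext j
  simp only [Finset.mem_filter, Finset.mem_univ, true_and, Finset.mem_singleton,
    Function.update_apply]
  by_cases h : j = i <;> simp [h]

/-! invariant and potential -/

def InvP (e₀ : Sym2 V) (x : G.edgeFinset → Bool) : Prop :=
  IsMatchingSet (chosenE G x) ∧ ∀ e' ∈ uncov G x, ∃ w, w ∈ e₀ ∧ w ∈ e'

def Phi (e₀ : Sym2 V) (x : G.edgeFinset → Bool) : ℕ :=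
  (Finset.univ.filter fun w : V => w ∈ e₀ ∧ ∃ e' ∈ uncov G x, w ∈ e').card

lemma Phi_le_two (e₀ : Sym2 V) (x : G.edgeFinset → Bool) : Phi G e₀ x ≤ 2 := by
  refine le_trans (Finset.card_le_card ?_) (card_verts_le_two e₀)
  intro w hw
  rw [Finset.mem_filter] at hw ⊢
  exact ⟨hw.1, hw.2.1⟩

lemma maximal_of_no_uncov {x : G.edgeFinset → Bool} (hmx : IsMatchingSet (chosenE G x))
    (h : uncov G x = ∅) : IsMaximalMatchingOf G (chosenE G x) := by
  refine ⟨chosenE_subset G x, hmx, ?_⟩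
  intro e' he'
  have : e' ∉ uncov G x := by rw [h]; exact Finset.notMem_empty _
  rw [uncov, Finset.mem_filter] at this
  have hcov : ∃ v ∈ coverSet G x, v ∈ e' := by
    by_contra hno
    exact this ⟨he', hno⟩
  obtain ⟨v, hvc, hve⟩ := hcov
  obtain ⟨e'', he'', hve''⟩ := (mem_coverSet G).mp hvc
  exact ⟨e'', he'', v, hve, hve''⟩

lemma uncov_nonempty {x : G.edgeFinset → Bool} (hmx : IsMatchingSet (chosenE G x))
    (hA : ¬IsMaximalMatchingOf G (chosenE G x)) : (uncov G x).Nonempty := by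
  rw [Finset.nonempty_iff_ne_empty]
  intro h
  exact hA (maximal_of_no_uncov G hmx h)

lemma Phi_pos {e₀ : Sym2 V} {x : G.edgeFinset → Bool} (hInv : InvP G e₀ x)
    (hA : ¬IsMaximalMatchingOf G (chosenE G x)) : 1 ≤ Phi G e₀ x := by
  obtain ⟨e', he'⟩ := uncov_nonempty G hInv.1 hA
  obtain ⟨w, hw1, hw2⟩ := hInv.2 e' he'
  rw [Phi]
  refine Finset.card_pos.mpr ⟨w, ?_⟩
  rw [Finset.mem_filter]
  exact ⟨Finset.mem_univ _, hw1, e', he', hw2⟩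

lemma Phi_lt {e₀ : Sym2 V} {x : G.edgeFinset → Bool} {i : G.edgeFinset}
    (hInv : InvP G e₀ x) (hxi : x i = false) (hu : (i : Sym2 V) ∈ uncov G x) :
    Phi G e₀ (Function.update x i true) < Phi G e₀ x := by
  obtain ⟨-, hmy, hsub⟩ := accept_uncov_add G hInv.1 hxi hu
  set y := Function.update x i true with hy
  have hsub' : uncov G y ⊆ uncov G x := hsub.trans (Finset.erase_subset _ _)
  apply Finset.card_lt_card
  rw [Finset.ssubset_iff_of_subset]
  · obtain ⟨w, hw1, hw2⟩ := hInv.2 _ hu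
    refine ⟨w, ?_, ?_⟩
    · rw [Finset.mem_filter]
      exact ⟨Finset.mem_univ _, hw1, _, hu, hw2⟩
    · rw [Finset.mem_filter]
      rintro ⟨-, -, e', he', hwe'⟩
      rw [uncov, Finset.mem_filter] at he'
      refine he'.2 ⟨w, ?_, hwe'⟩
      refine (mem_coverSet G).mpr ⟨(i : Sym2 V), ?_, hw2⟩
      rw [chosenE_update_true G x i]
      exact Finset.mem_insert_self _ _
  · intro w hw
    rw [Finset.mem_filter] at hw ⊢
    obtain ⟨hwu, hw1, e', he', hwe'⟩ := hw
    exact ⟨hwu, hw1, e', hsub' he', hwe'⟩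

lemma InvP_step {e₀ : Sym2 V} {x : G.edgeFinset → Bool} {i : G.edgeFinset}
    (hInv : InvP G e₀ x) (hxi : x i = false) (hu : (i : Sym2 V) ∈ uncov G x) :
    InvP G e₀ (Function.update x i true) := by
  obtain ⟨-, hmy, hsub⟩ := accept_uncov_add G hInv.1 hxi hu
  refine ⟨hmy, ?_⟩
  intro e' he'
  exact hInv.2 e' ((hsub.trans (Finset.erase_subset _ _)) he')

/-- any accepted one-bit flip from an invariant state keeps the invariant
and strictly decreases the potential -/
lemma step_lemma {e₀ : Sym2 V} {x y : G.edgeFinset → Bool}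
    (hInv : InvP G e₀ x) (hd : hammingDist x y = 1) (hacc : fVC G y ≤ fVC G x) :
    InvP G e₀ y ∧ Phi G e₀ y < Phi G e₀ x := by
  obtain ⟨i, rfl⟩ := eq_flip_of_hammingDist_one' hd
  cases hxi : x i with
  | true =>
    exfalso
    simp only [hxi, Bool.not_true] at hacc
    exact absurd hacc (not_le.mpr (reject_remove G hInv.1 hxi))
  | false =>
    simp only [hxi, Bool.not_false] at hacc ⊢
    by_cases hu : (i : Sym2 V) ∈ uncov G x
    · exact ⟨InvP_step G hInv hxi hu, Phi_lt G hInv hxi hu⟩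
    · exact absurd hacc (not_le.mpr (reject_cov_add G hInv.1 hxi hu))

lemma exists_progress {e₀ : Sym2 V} {x : G.edgeFinset → Bool}
    (hInv : InvP G e₀ x) (hA : ¬IsMaximalMatchingOf G (chosenE G x)) :
    ∃ z : G.edgeFinset → Bool, hammingDist x z = 1 ∧ fVC G z ≤ fVC G x ∧
      Phi G e₀ z < Phi G e₀ x := by
  obtain ⟨e', he'⟩ := uncov_nonempty G hInv.1 hA
  have heE : e' ∈ G.edgeFinset := (Finset.mem_filter.mp he').1
  set i : G.edgeFinset := ⟨e', heE⟩ with hi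
  have hxi : x i = false := by
    cases hxv : x i with
    | false => rfl
    | true =>
      exfalso
      have hch : (i : Sym2 V) ∈ chosenE G x := mem_chosenE_of_true G hxv
      rw [uncov, Finset.mem_filter] at he'
      obtain ⟨v, hvi⟩ := sym2_exists_mem e'
      exact he'.2 ⟨v, (mem_coverSet G).mpr ⟨e', hch, hvi⟩, hvi⟩
  refine ⟨Function.update x i true, ?_, ?_, ?_⟩
  · have := hammingDist_flip' x i
    rw [hxi] at this
    exact this
  · exact (accept_uncov_add G hInv.1 hxi he').1
  · exact Phi_lt G hInv hxi he'

/-! 2-approximation -/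

lemma two_approx {x : G.edgeFinset → Bool} (h : IsMaximalMatchingOf G (chosenE G x)) :
    IsVertexCover G (coverSet G x) ∧
      ∀ C : Finset V, IsVertexCover G C → (coverSet G x).card ≤ 2 * C.card := by
  constructor
  · intro e' he'
    obtain ⟨e'', he'', v, hv1, hv2⟩ := h.2.2 e' he'
    exact ⟨v, (mem_coverSet G).mpr ⟨e'', he'', hv2⟩, hv1⟩
  · intro C hC
    have h1 : (coverSet G x).card ≤ 2 * (chosenE G x).card := by
      have hsub : coverSet G x ⊆
          (chosenE G x).biUnion (fun e' => Finset.univ.filter (fun v => v ∈ e')) := by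
        intro v hv
        obtain ⟨e', he', hve⟩ := (mem_coverSet G).mp hv
        exact Finset.mem_biUnion.mpr ⟨e', he', by simp [hve]⟩
      calc _ ≤ _ := Finset.card_le_card hsub
        _ ≤ ∑ e' ∈ chosenE G x, (Finset.univ.filter (fun v => v ∈ e')).card :=
            Finset.card_biUnion_le
        _ ≤ ∑ _e' ∈ chosenE G x, 2 := Finset.sum_le_sum (fun e' _ => card_verts_le_two e')
        _ = 2 * (chosenE G x).card := by rw [Finset.sum_const, smul_eq_mul, mul_comm]
    have h2 : (chosenE G x).card ≤ C.card := by
      have hP : ∀ e' ∈ chosenE G x, ∃ v, v ∈ C ∧ v ∈ e' := by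
        intro e' he'
        obtain ⟨v, hv1, hv2⟩ := hC e' (h.1 he')
        exact ⟨v, hv1, hv2⟩
      set f : Sym2 V → V := fun e' =>
        if h' : ∃ v, v ∈ C ∧ v ∈ e' then h'.choose else (sym2_exists_mem e').choose with hf
      have hfspec : ∀ e' ∈ chosenE G x, f e' ∈ C ∧ f e' ∈ e' := by
        intro e' he'
        have h' := hP e' he'
        rw [hf]
        simp only [dif_pos h']
        exact h'.choose_spec
      apply Finset.card_le_card_of_injOn f (fun e' he' => (hfspec e' he').1)
      intro e1 h1' e2 h2' heq
      by_contra hne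
      have m1 := hfspec e1 (Finset.mem_coe.mp h1')
      have m2 := hfspec e2 (Finset.mem_coe.mp h2')
      exact h.2.1 e1 (Finset.mem_coe.mp h1') e2 (Finset.mem_coe.mp h2') hne (f e1)
        ⟨m1.2, heq ▸ m2.2⟩
    omega

/-! initial states -/

lemma init_add (G' : SimpleGraph V) [DecidableRel G'.Adj] (e : Sym2 V)
    (x₀ : G.edgeFinset → Bool)
    (h1 : G.edgeFinset = insert e G'.edgeFinset)
    (h3 : IsMaximalMatchingOf G' (chosenE G x₀)) : InvP G e x₀ := by
  refine ⟨h3.2.1, ?_⟩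
  intro e' he'
  have heE : e' ∈ G.edgeFinset := (Finset.mem_filter.mp he').1
  rw [h1, Finset.mem_insert] at heE
  rcases heE with rfl | heE
  · obtain ⟨w, hw⟩ := sym2_exists_mem e'
    exact ⟨w, hw, hw⟩
  · exfalso
    obtain ⟨e'', he'', v, hv1, hv2⟩ := h3.2.2 e' heE
    rw [uncov, Finset.mem_filter] at he'
    exact he'.2 ⟨v, (mem_coverSet G).mpr ⟨e'', he'', hv2⟩, hv1⟩

lemma init_del (G₀ : SimpleGraph V) [DecidableRel G₀.Adj] (e : Sym2 V)
    (x₀ : G.edgeFinset → Bool) (M : Finset (Sym2 V))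
    (h1 : G₀.edgeFinset = insert e G.edgeFinset)
    (hM : IsMaximalMatchingOf G₀ M) (hch : chosenE G x₀ = M.erase e) : InvP G e x₀ := by
  constructor
  · rw [hch]
    exact matching_subset (Finset.erase_subset _ _) hM.2.1
  · intro e' he'
    have heE : e' ∈ G.edgeFinset := (Finset.mem_filter.mp he').1
    have heE0 : e' ∈ G₀.edgeFinset := by
      rw [h1]
      exact Finset.mem_insert_of_mem heE
    obtain ⟨e'', he'', v, hv1, hv2⟩ := hM.2.2 e' heE0
    by_cases hee : e'' = e
    · exact ⟨v, hee ▸ hv2, hv1⟩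
    · exfalso
      have : e'' ∈ chosenE G x₀ := by
        rw [hch, Finset.mem_erase]
        exact ⟨hee, he''⟩
      rw [uncov, Finset.mem_filter] at he'
      exact he'.2 ⟨v, (mem_coverSet G).mpr ⟨e'', this, hv2⟩, hv1⟩

end Aux2

/-- For the dynamic vertex cover problem (one edge is added or deleted), RLS with
the edge-based representation and fitness `f_e`, started from a maximal matching of the old
instance, finds a maximal matching of the new instance — inducing a 2-approximate vertex
cover — in expected time `O(m)`. -/
theorem stmt_10 :
    ∃ c : ℝ, 0 < c ∧ ∃ m₀ : ℕ,
      ∀ (V : Type) (_ : Fintype V) (_ : DecidableEq V)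
        (G G' : SimpleGraph V) (_ : DecidableRel G.Adj) (_ : DecidableRel G'.Adj)
        (e : Sym2 V) (x₀ : G'.edgeFinset → Bool),
        m₀ ≤ G'.edgeFinset.card →
          DynVCStart G G' e x₀ →
            (hitTime (eaKernel pmutRLSg fun x z => fVC G' z ≤ fVC G' x)
                (fun x => IsMaximalMatchingOf G' (chosenE G' x)) x₀ ≤
              ENNReal.ofReal (c * G'.edgeFinset.card)) ∧
            (∀ x : G'.edgeFinset → Bool, IsMaximalMatchingOf G' (chosenE G' x) →
              IsVertexCover G' (coverSet G' x) ∧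
                ∀ C : Finset V, IsVertexCover G' C →
                  (coverSet G' x).card ≤ 2 * C.card) := by
  refine ⟨2, by norm_num, 1, ?_⟩
  intro V iV dV G G' rG rG' e x₀ hm₀ hdyn
  constructor
  · -- hitting time bound
    have hcard : Fintype.card G'.edgeFinset = G'.edgeFinset.card := Fintype.card_coe _
    have hne : Nonempty G'.edgeFinset := by
      rw [← Fintype.card_pos_iff, hcard]; omega
    set p : ℝ≥0∞ := (Fintype.card G'.edgeFinset : ℝ≥0∞)⁻¹ with hp
    have hp0 : p ≠ 0 := ENNReal.inv_ne_zero.mpr (ENNReal.natCast_ne_top _)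
    have hp1 : p ≤ 1 := by
      rw [hp]
      apply ENNReal.inv_le_one.mpr
      rw [hcard]
      exact_mod_cast hm₀
    have hminv : InvP G' e x₀ := by
      rcases hdyn with ⟨h1, h2, h3⟩ | ⟨h1, h2, M, hM, hch⟩
      · exact init_add G' G e x₀ h1 h3
      · exact init_del G' G e x₀ M h1 hM hch
    have hbound := hitTime_le_of_potential
      (eaKernel pmutRLSg fun x z => fVC G' z ≤ fVC G' x)
      (fun x => IsMaximalMatchingOf G' (chosenE G' x))
      (InvP G' e) (Phi G' e) 2 p hp0 hp1
      (fun x => eaKernel_tsum_eq_one _ x)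
      (fun x y hx hA hK => by
        rcases eaKernel_ne_zero_cases _ x y hK with rfl | ⟨hd, hacc⟩
        · exact ⟨hx, le_rfl⟩
        · obtain ⟨hy, hlt⟩ := step_lemma G' hx hd hacc
          exact ⟨hy, hlt.le⟩)
      (fun x _ => Phi_le_two G' e x)
      (fun x hx hA => by
        obtain ⟨z, hd, hacc, hlt⟩ := exists_progress G' hx hA
        have h1 : p ≤ eaKernel pmutRLSg (fun a b => fVC G' b ≤ fVC G' a) x z :=
          le_eaKernel _ x z hd hacc
        have h2 := ENNReal.le_tsum
          (f := fun y => if Phi G' e y < Phi G' e x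
            then eaKernel pmutRLSg (fun a b => fVC G' b ≤ fVC G' a) x y else 0) z
        rw [if_pos hlt] at h2
        exact h1.trans h2)
      x₀ hminv
    refine hbound.trans (le_of_eq ?_)
    rw [hp, div_eq_mul_inv, inv_inv, hcard]
    rw [show ((2:ℝ) * (G'.edgeFinset.card : ℝ)) = ((2 * G'.edgeFinset.card : ℕ) : ℝ) by
      push_cast; ring]
    rw [ENNReal.ofReal_natCast]
    push_cast
    ring
  · intro x hx
    exact two_approx G' hx
end
end
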